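/- arXiv:2512.13273 — 5 statements merged into one kernel-verified Lean document; each statement's English description precedes it below -/
import Mathlib

section
/- Let D be a triangulated category and let t1 = (𝒰1,𝒱1), t2 = (𝒰2,𝒱2) be torsion pairs in D with t1 ≼ t2, i.e. 𝒰1 ⊆ 𝒰2 and 𝒰1[1] ⊆ 𝒰2. Then 𝒰2 = 𝒰1 * (𝒰2 ∩ 𝒱1) and 𝒱1 = (𝒰2 ∩ 𝒱1) * 𝒱2. -/
open CategoryTheory Category Limits Pretriangulated

universe v u

variable (D : Type u) [Category.{v} D] [Preadditive D] [HasZeroObject D]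
  [HasShift D ℤ] [∀ n : ℤ, (shiftFunctor D n).Additive]
  [Pretriangulated D] [HasBinaryBiproducts D]

/-- `shiftSet D S n` is the full subcategory `S[n]`: objects isomorphic to `X⟦n⟧`
with `X ∈ S`. -/
def shiftSet (S : Set D) (n : ℤ) : Set D :=
  {A | ∃ B ∈ S, Nonempty (A ≅ B⟦n⟧)}

/-- `starSet D X Y` is `X * Y`: the class of objects `A` admitting a distinguished
triangle `X → A → Y → X[1]` with `X ∈ 𝒳` and `Y ∈ 𝒴`. -/
def starSet (X Y : Set D) : Set D :=
  {A | ∃ (B C : D) (f : B ⟶ A) (g : A ⟶ C) (h : C ⟶ B⟦(1 : ℤ)⟧),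
    B ∈ X ∧ C ∈ Y ∧ Triangle.mk f g h ∈ distTriang D}

/-- `Hom(X, Y) = 0`: every morphism from an object of `X` to an object of `Y` is zero. -/
def homZero (X Y : Set D) : Prop :=
  ∀ A ∈ X, ∀ B ∈ Y, ∀ f : A ⟶ B, f = 0

/-- a class of objects closed under isomorphisms -/
def isoClosed (S : Set D) : Prop :=
  ∀ ⦃A B : D⦄, (A ≅ B) → A ∈ S → B ∈ S

/-- an additive full subcategory (closed under isomorphisms) which is closed under
direct summands -/
structure AdditiveClosed (S : Set D) : Prop where
  iso : isoClosed D S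
  zero : ∀ Z : D, IsZero Z → Z ∈ S
  sum : ∀ A ∈ S, ∀ B ∈ S, (A ⊞ B) ∈ S
  summand : ∀ A ∈ S, ∀ (X : D) (i : X ⟶ A) (p : A ⟶ X), i ≫ p = 𝟙 X → X ∈ S

/-- a torsion pair `(U, V)` in the triangulated category `D` -/
structure IsTorsionPair (U V : Set D) : Prop where
  addU : AdditiveClosed D U
  addV : AdditiveClosed D V
  hom_zero : homZero D U V
  cover : ∀ A : D, A ∈ starSet D U V

/-- `t₁ ≼ t₂` for torsion pairs in a triangulated category: `U₁ ⊆ U₂` and `U₁[1] ⊆ U₂`. -/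
def torsLE (U₁ U₂ : Set D) : Prop :=
  U₁ ⊆ U₂ ∧ shiftSet D U₁ 1 ⊆ U₂

/-- a torsion pair `(T, F)` in an (extension-closed) full subcategory `H` of `D`:
`T` and `F` are additive subcategories of `H` closed under direct summands,
`Hom(T, F) = 0`, and every object of `H` admits a distinguished triangle
`T → X → F → T[1]` with `T ∈ 𝒯`, `F ∈ ℱ`. -/
structure IsTorsionPairIn (H T F : Set D) : Prop where
  subT : T ⊆ H
  subF : F ⊆ H
  isoT : ∀ ⦃A B : D⦄, (A ≅ B) → A ∈ T → B ∈ H → B ∈ T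
  isoF : ∀ ⦃A B : D⦄, (A ≅ B) → A ∈ F → B ∈ H → B ∈ F
  zeroT : ∀ Z : D, IsZero Z → Z ∈ H → Z ∈ T
  zeroF : ∀ Z : D, IsZero Z → Z ∈ H → Z ∈ F
  sumT : ∀ A ∈ T, ∀ B ∈ T, (A ⊞ B) ∈ T
  sumF : ∀ A ∈ F, ∀ B ∈ F, (A ⊞ B) ∈ F
  summandT : ∀ A ∈ T, ∀ (X : D) (i : X ⟶ A) (p : A ⟶ X), i ≫ p = 𝟙 X → X ∈ H → X ∈ T
  summandF : ∀ A ∈ F, ∀ (X : D) (i : X ⟶ A) (p : A ⟶ X), i ≫ p = 𝟙 X → X ∈ H → X ∈ F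
  hom_zero : homZero D T F
  cover : ∀ A ∈ H, A ∈ starSet D T F

/-- an `s`-torsion pair in `H`: a torsion pair with moreover `Hom(T, F[-1]) = 0`. -/
structure IsSTorsionPairIn (H T F : Set D) extends IsTorsionPairIn D H T F : Prop where
  neg_hom_zero : ∀ A ∈ T, ∀ B ∈ F, ∀ f : A ⟶ B⟦(-1 : ℤ)⟧, f = 0

/-- the relation `≼` for torsion pairs in a subcategory `H`:
`Hom(T, F') = 0` and `Hom(T, F'[-1]) = 0`. -/
def torsLEIn (T F' : Set D) : Prop :=
  homZero D T F' ∧ homZero D T (shiftSet D F' (-1))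

/-- a `t`-structure `(L, G) = (S^{≤0}, S^{≥0})` on a triangulated (full) subcategory `S`
of `D` (take `S = Set.univ` for a `t`-structure on `D` itself). -/
structure IsTStructureOn (S L G : Set D) : Prop where
  subL : L ⊆ S
  subG : G ⊆ S
  isoL : ∀ ⦃A B : D⦄, (A ≅ B) → A ∈ L → B ∈ S → B ∈ L
  isoG : ∀ ⦃A B : D⦄, (A ≅ B) → A ∈ G → B ∈ S → B ∈ G
  hom_zero : homZero D L (shiftSet D G (-1))
  cover : ∀ A ∈ S, A ∈ starSet D L (shiftSet D G (-1))
  shiftL : L ⊆ shiftSet D L (-1)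
  shiftG : shiftSet D G (-1) ⊆ G

/-- a `t`-structure `(L, G) = (D^{≤0}, D^{≥0})` on `D`. -/
def IsTStructure (L G : Set D) : Prop := IsTStructureOn D Set.univ L G

/-- a triangulated full subcategory of `D`. -/
structure IsTriangulatedSub (S : Set D) : Prop where
  iso : isoClosed D S
  zero : ∀ Z : D, IsZero Z → Z ∈ S
  shift : ∀ (n : ℤ), ∀ A ∈ S, A⟦n⟧ ∈ S
  ext₂ : ∀ (T : Triangle D), (T ∈ distTriang D) → T.obj₁ ∈ S → T.obj₃ ∈ S → T.obj₂ ∈ S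

/-- an `m`-extended heart on `D`: a full subcategory of the form
`V^{≥ -(m-1)} ∩ V^{≤ 0}` for some `t`-structure `(V^{≤0}, V^{≥0})` on `D`. -/
def IsExtendedHeart (m : ℤ) (E : Set D) : Prop :=
  ∃ L G : Set D, IsTStructure D L G ∧ E = shiftSet D G (m - 1) ∩ L

/-- the relation `E₁ ≤ E₂` for `m`-extended hearts:
`E₁ ⊆ E₂[m] * E₂` and `E₂ ⊆ E₁ * E₁[-m]`. -/
def extHeartLE (m : ℤ) (E₁ E₂ : Set D) : Prop :=
  E₁ ⊆ starSet D (shiftSet D E₂ m) E₂ ∧ E₂ ⊆ starSet D E₁ (shiftSet D E₁ (-m))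


lemma memU_of_homZero {U V : Set D} (t : IsTorsionPair D U V) (A : D)
    (h : ∀ B ∈ V, ∀ f : A ⟶ B, f = 0) : A ∈ U := by
  obtain ⟨u, v, f, g, h', hu, hv, hT⟩ := t.cover A
  obtain ⟨s, hs⟩ := Triangle.coyoneda_exact₂ _ hT (𝟙 A)
    (by simp [h v hv g]; exact comp_zero)
  exact t.addU.summand u hu A s f hs.symm

lemma memV_of_homZero {U V : Set D} (t : IsTorsionPair D U V) (A : D)
    (h : ∀ B ∈ U, ∀ f : B ⟶ A, f = 0) : A ∈ V := by
  obtain ⟨u, v, f, g, h', hu, hv, hT⟩ := t.cover A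
  obtain ⟨s, hs⟩ := Triangle.yoneda_exact₂ _ hT (𝟙 A)
    (by simp [h u hu f]; exact zero_comp)
  exact t.addV.summand v hv A g s hs.symm

/-- Lemma 3.1 in the triangulated case: if `t₁ ≼ t₂`, then
`𝒰₂ = 𝒰₁ * (𝒰₂ ∩ 𝒱₁)` and `𝒱₁ = (𝒰₂ ∩ 𝒱₁) * 𝒱₂`. -/
theorem stmt0 (U₁ V₁ U₂ V₂ : Set D)
    (t₁ : IsTorsionPair D U₁ V₁) (t₂ : IsTorsionPair D U₂ V₂)
    (hle : torsLE D U₁ U₂) :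
    U₂ = starSet D U₁ (U₂ ∩ V₁) ∧ V₁ = starSet D (U₂ ∩ V₁) V₂ := by
  constructor
  · apply Set.eq_of_subset_of_subset
    · intro A hA
      obtain ⟨u, v, f, g, h, hu, hv, hT⟩ := t₁.cover A
      have hvU₂ : v ∈ U₂ := by
        apply memU_of_homZero D t₂
        intro b hb φ
        obtain ⟨ψ, hψ⟩ := Triangle.yoneda_exact₃ _ hT φ
          (t₂.hom_zero A hA b hb _)
        rw [hψ, t₂.hom_zero _ (hle.2 ⟨u, hu, ⟨Iso.refl _⟩⟩) b hb ψ]; exact comp_zero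
      exact ⟨u, v, f, g, h, hu, ⟨hvU₂, hv⟩, hT⟩
    · rintro A ⟨u, c, f, g, h, hu, ⟨hcU, _⟩, hT⟩
      apply memU_of_homZero D t₂
      intro b hb φ
      obtain ⟨ψ, hψ⟩ := Triangle.yoneda_exact₂ _ hT φ
        (t₂.hom_zero u (hle.1 hu) b hb _)
      rw [hψ, t₂.hom_zero c hcU b hb ψ]; exact comp_zero
  · apply Set.eq_of_subset_of_subset
    · intro B hB
      obtain ⟨u, v, f, g, h, hu, hv, hT⟩ := t₂.cover B
      have huV₁ : u ∈ V₁ := by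
        apply memV_of_homZero D t₁
        intro a ha φ
        obtain ⟨ψ, hψ⟩ := Triangle.coyoneda_exact₂ _
          (inv_rot_of_distTriang _ hT) φ (t₁.hom_zero a ha B hB _)
        have hψ1 : (shiftFunctor D (1 : ℤ)).map ψ = 0 := by
          have e := ((shiftEquiv D (1 : ℤ)).counitIso.app v)
          have hz : (shiftFunctor D (1 : ℤ)).map ψ ≫ e.hom = 0 :=
            t₂.hom_zero _ (hle.2 ⟨a, ha, ⟨Iso.refl _⟩⟩) v hv _
          exact (cancel_mono e.hom).1 (hz.trans zero_comp.symm)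
        have hψ0 : ψ = 0 := (shiftFunctor D (1 : ℤ)).map_injective
          (by rw [hψ1, Functor.map_zero])
        rw [hψ, hψ0]; exact zero_comp
      exact ⟨u, v, f, g, h, ⟨hu, huV₁⟩, hv, hT⟩
    · rintro B ⟨c, v, f, g, h, ⟨_, hcV⟩, hv, hT⟩
      apply memV_of_homZero D t₁
      intro a ha φ
      obtain ⟨ψ, hψ⟩ := Triangle.coyoneda_exact₂ _ hT φ
        (t₂.hom_zero a (hle.1 ha) v hv _)
      rw [hψ, t₁.hom_zero a ha c hcV ψ]; exact zero_comp
end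

section
/- Let D be a triangulated category and let t1 = (𝒰1,𝒱1), t2 = (𝒰2,𝒱2) be torsion pairs in D with t1 ≼ t2. If t = (𝒰,𝒱) is a torsion pair in D with t1 ≼ t ≼ t2, then (𝒰 ∩ 𝒱1, 𝒱 ∩ 𝒰2) is a torsion pair in the extension-closed subcategory ℋ = 𝒰2 ∩ 𝒱1, and moreover 𝒰1 * (𝒰 ∩ 𝒱1) = 𝒰 and (𝒱 ∩ 𝒰2) * 𝒱2 = 𝒱. -/
open CategoryTheory Category Limits Pretriangulated

universe v u

variable (D : Type u) [Category.{v} D] [Preadditive D] [HasZeroObject D]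
  [HasShift D ℤ] [∀ n : ℤ, (shiftFunctor D n).Additive]
  [Pretriangulated D] [HasBinaryBiproducts D]

section Aux

variable {D}

/-- If `Hom(x⟦1⟧, v) = 0` then `Hom(x, v⟦-1⟧) = 0`. -/
lemma shiftHomZero {x v : D} (h : ∀ g : (x⟦(1:ℤ)⟧ : D) ⟶ v, g = 0)
    (f : x ⟶ (v⟦(-1:ℤ)⟧ : D)) : f = 0 := by
  have h1 : (shiftFunctor D (1:ℤ)).map f ≫
      ((shiftFunctorCompIsoId D (-1:ℤ) (1:ℤ) (by ring)).hom.app v) = 0 := h _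
  have h2 : (shiftFunctor D (1:ℤ)).map f = 0 := by
    rw [← cancel_mono ((shiftFunctorCompIsoId D (-1:ℤ) (1:ℤ) (by ring)).hom.app v)]
    rw [h1, zero_comp]
  apply (shiftFunctor D (1:ℤ)).map_injective
  rw [h2, Functor.map_zero]

/-- An object left-orthogonal to everything in `U` lies in `V`. -/
lemma mem_of_perp_right {U V : Set D} (t : IsTorsionPair D U V) {A : D}
    (h : ∀ x ∈ U, ∀ f : x ⟶ A, f = 0) : A ∈ V := by
  obtain ⟨B, C, f, g, w, hB, hC, hT⟩ := t.cover A
  obtain ⟨r, hr⟩ := Triangle.yoneda_exact₂ _ hT (𝟙 A)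
    (by change f ≫ 𝟙 A = 0; rw [h B hB f, zero_comp])
  exact t.addV.summand C hC A g r hr.symm

/-- An object right-orthogonal to everything in `V` lies in `U`. -/
lemma mem_of_perp_left {U V : Set D} (t : IsTorsionPair D U V) {A : D}
    (h : ∀ y ∈ V, ∀ f : A ⟶ y, f = 0) : A ∈ U := by
  obtain ⟨B, C, f, g, w, hB, hC, hT⟩ := t.cover A
  obtain ⟨s, hs⟩ := Triangle.coyoneda_exact₂ _ hT (𝟙 A)
    (by change 𝟙 A ≫ g = 0; rw [h C hC g, comp_zero])
  exact t.addU.summand B hB A s f hs.symm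

end Aux

/-- Lemma 3.2 in the triangulated case: if `t₁ ≼ t ≼ t₂`, then
`(𝒰 ∩ 𝒱₁, 𝒱 ∩ 𝒰₂)` is a torsion pair in `ℋ = 𝒰₂ ∩ 𝒱₁`, and moreover
`𝒰₁ * (𝒰 ∩ 𝒱₁) = 𝒰` and `(𝒱 ∩ 𝒰₂) * 𝒱₂ = 𝒱`. -/
theorem stmt1 (U₁ V₁ U₂ V₂ U V : Set D)
    (t₁ : IsTorsionPair D U₁ V₁) (t₂ : IsTorsionPair D U₂ V₂)
    (t : IsTorsionPair D U V)
    (h12 : torsLE D U₁ U₂) (h1t : torsLE D U₁ U) (ht2 : torsLE D U U₂) :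
    IsTorsionPairIn D (U₂ ∩ V₁) (U ∩ V₁) (V ∩ U₂) ∧
    starSet D U₁ (U ∩ V₁) = U ∧ starSet D (V ∩ U₂) V₂ = V := by
  -- basic shift membership facts
  have hsh1 : ∀ x ∈ U₁, (x⟦(1:ℤ)⟧ : D) ∈ U := fun x hx => h1t.2 ⟨x, hx, ⟨Iso.refl _⟩⟩
  have hsh2 : ∀ x ∈ U, (x⟦(1:ℤ)⟧ : D) ∈ U₂ := fun x hx => ht2.2 ⟨x, hx, ⟨Iso.refl _⟩⟩
  -- `V ⊆ V₁`
  have hVV1 : V ⊆ V₁ := fun A hA =>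
    mem_of_perp_right t₁ (fun x hx f => t.hom_zero x (h1t.1 hx) A hA f)
  refine ⟨?_, ?_, ?_⟩
  · -- the torsion pair in `H = U₂ ∩ V₁`
    refine
      { subT := fun A hA => ⟨ht2.1 hA.1, hA.2⟩
        subF := fun A hA => ⟨hA.2, hVV1 hA.1⟩
        isoT := fun A B e hA _ => ⟨t.addU.iso e hA.1, t₁.addV.iso e hA.2⟩
        isoF := fun A B e hA _ => ⟨t.addV.iso e hA.1, t₂.addU.iso e hA.2⟩
        zeroT := fun Z hZ _ => ⟨t.addU.zero Z hZ, t₁.addV.zero Z hZ⟩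
        zeroF := fun Z hZ _ => ⟨t.addV.zero Z hZ, t₂.addU.zero Z hZ⟩
        sumT := fun A hA B hB => ⟨t.addU.sum A hA.1 B hB.1, t₁.addV.sum A hA.2 B hB.2⟩
        sumF := fun A hA B hB => ⟨t.addV.sum A hA.1 B hB.1, t₂.addU.sum A hA.2 B hB.2⟩
        summandT := fun A hA X i p hip _ =>
          ⟨t.addU.summand A hA.1 X i p hip, t₁.addV.summand A hA.2 X i p hip⟩
        summandF := fun A hA X i p hip _ =>
          ⟨t.addV.summand A hA.1 X i p hip, t₂.addU.summand A hA.2 X i p hip⟩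
        hom_zero := fun A hA B hB f => t.hom_zero A hA.1 B hB.1 f
        cover := ?_ }
    intro A hA
    obtain ⟨u, v, f, g, w, hu, hv, hT⟩ := t.cover A
    -- `u ∈ V₁`
    have huV1 : u ∈ V₁ := by
      apply mem_of_perp_right t₁
      intro x hx φ
      obtain ⟨ψ, hψ⟩ := Triangle.coyoneda_exact₂ _
        (inv_rot_of_distTriang _ hT) φ
        (by exact t₁.hom_zero x hx A hA.2 (φ ≫ f))
      have hψ0 : ψ = 0 :=
        shiftHomZero (fun g' => t.hom_zero _ (hsh1 x hx) v hv g') ψ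
      rw [hψ, hψ0, zero_comp]
      rfl
    -- `v ∈ U₂`
    have hvU2 : v ∈ U₂ := by
      apply mem_of_perp_left t₂
      intro y hy φ
      obtain ⟨ψ, hψ⟩ := Triangle.yoneda_exact₃ _ hT φ
        (by exact t₂.hom_zero A hA.1 y hy (g ≫ φ))
      have hψ0 : ψ = 0 := t₂.hom_zero _ (hsh2 u hu) y hy ψ
      rw [hψ, hψ0, comp_zero]
      rfl
    exact ⟨u, v, f, g, w, ⟨hu, huV1⟩, ⟨hv, hvU2⟩, hT⟩
  · -- `U₁ * (U ∩ V₁) = U`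
    apply Set.eq_of_subset_of_subset
    · rintro A ⟨B, C, f, g, w, hB, hC, hT⟩
      apply mem_of_perp_left t
      intro y hy φ
      obtain ⟨ψ, hψ⟩ := Triangle.yoneda_exact₂ _ hT φ
        (by exact t.hom_zero B (h1t.1 hB) y hy (f ≫ φ))
      have hψ0 : ψ = 0 := t.hom_zero C hC.1 y hy ψ
      rw [hψ, hψ0, comp_zero]
      rfl
    · intro A hA
      obtain ⟨u, v, f, g, w, hu, hv, hT⟩ := t₁.cover A
      have hvU : v ∈ U := by
        apply mem_of_perp_left t
        intro y hy φ
        obtain ⟨ψ, hψ⟩ := Triangle.yoneda_exact₃ _ hT φ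
          (by exact t.hom_zero A hA y hy (g ≫ φ))
        have hψ0 : ψ = 0 := t.hom_zero _ (hsh1 u hu) y hy ψ
        rw [hψ, hψ0, comp_zero]
        rfl
      exact ⟨u, v, f, g, w, hu, ⟨hvU, hv⟩, hT⟩
  · -- `(V ∩ U₂) * V₂ = V`
    apply Set.eq_of_subset_of_subset
    · rintro A ⟨B, C, f, g, w, hB, hC, hT⟩
      apply mem_of_perp_right t
      intro x hx φ
      obtain ⟨ψ, hψ⟩ := Triangle.coyoneda_exact₂ _ hT φ
        (by exact t₂.hom_zero x (ht2.1 hx) C hC (φ ≫ g))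
      have hψ0 : ψ = 0 := t.hom_zero x hx B hB.1 ψ
      rw [hψ, hψ0, zero_comp]
      rfl
    · intro A hA
      obtain ⟨u, v, f, g, w, hu, hv, hT⟩ := t₂.cover A
      have huV : u ∈ V := by
        apply mem_of_perp_right t
        intro x hx φ
        obtain ⟨ψ, hψ⟩ := Triangle.coyoneda_exact₂ _
          (inv_rot_of_distTriang _ hT) φ
          (by exact t.hom_zero x hx A hA (φ ≫ f))
        have hψ0 : ψ = 0 :=
          shiftHomZero (fun g' => t₂.hom_zero _ (hsh2 x hx) v hv g') ψ
        rw [hψ, hψ0, zero_comp]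
        rfl
      exact ⟨u, v, f, g, w, ⟨huV, hu⟩, hv, hT⟩
end

section
/- Let D be a triangulated category and let t1 = (𝒰1,𝒱1), t2 = (𝒰2,𝒱2) be torsion pairs in D with t1 ≼ t2, and set ℋ = 𝒰2 ∩ 𝒱1. Then the assignments Φ(𝒰,𝒱) = (𝒰 ∩ 𝒱1, 𝒱 ∩ 𝒰2) and Ψ(𝒯,ℱ) = (𝒰1 * 𝒯, ℱ * 𝒱2) are mutually inverse, order preserving bijections between the set of torsion pairs t = (𝒰,𝒱) in D with t1 ≼ t ≼ t2 and the set of torsion pairs (𝒯,ℱ) in ℋ satisfying 𝒯[1] ⊆ 𝒰2 and ℱ[-1] ⊆ 𝒱1. -/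
open CategoryTheory Category Limits Pretriangulated

universe v u

variable (D : Type u) [Category.{v} D] [Preadditive D] [HasZeroObject D]
  [HasShift D ℤ] [∀ n : ℤ, (shiftFunctor D n).Additive]
  [Pretriangulated D] [HasBinaryBiproducts D]

section AuxLemmas
set_option linter.unusedSectionVars false
set_option linter.unnecessarySimpa false
set_option linter.unusedVariables false

lemma mk_yoneda_exact₂ {A B C : D} {f : A ⟶ B} {g : B ⟶ C} {h : C ⟶ A⟦(1:ℤ)⟧}
    (hT : Triangle.mk f g h ∈ distTriang D) {Z : D} (φ : B ⟶ Z) (hφ : f ≫ φ = 0) :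
    ∃ ψ : C ⟶ Z, φ = g ≫ ψ :=
  Triangle.yoneda_exact₂ _ hT φ hφ

lemma mk_yoneda_exact₃ {A B C : D} {f : A ⟶ B} {g : B ⟶ C} {h : C ⟶ A⟦(1:ℤ)⟧}
    (hT : Triangle.mk f g h ∈ distTriang D) {Z : D} (φ : C ⟶ Z) (hφ : g ≫ φ = 0) :
    ∃ ψ : A⟦(1:ℤ)⟧ ⟶ Z, φ = h ≫ ψ :=
  Triangle.yoneda_exact₃ _ hT φ hφ

lemma mk_coyoneda_exact₁ {A B C : D} {f : A ⟶ B} {g : B ⟶ C} {h : C ⟶ A⟦(1:ℤ)⟧}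
    (hT : Triangle.mk f g h ∈ distTriang D) {Z : D} (φ : Z ⟶ A⟦(1:ℤ)⟧)
    (hφ : φ ≫ f⟦(1:ℤ)⟧' = 0) : ∃ ψ : Z ⟶ C, φ = ψ ≫ h :=
  Triangle.coyoneda_exact₁ _ hT φ hφ

lemma mk_coyoneda_exact₂ {A B C : D} {f : A ⟶ B} {g : B ⟶ C} {h : C ⟶ A⟦(1:ℤ)⟧}
    (hT : Triangle.mk f g h ∈ distTriang D) {Z : D} (φ : Z ⟶ B) (hφ : φ ≫ g = 0) :
    ∃ ψ : Z ⟶ A, φ = ψ ≫ f :=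
  Triangle.coyoneda_exact₂ _ hT φ hφ

lemma mk_coyoneda_exact₃ {A B C : D} {f : A ⟶ B} {g : B ⟶ C} {h : C ⟶ A⟦(1:ℤ)⟧}
    (hT : Triangle.mk f g h ∈ distTriang D) {Z : D} (φ : Z ⟶ C) (hφ : φ ≫ h = 0) :
    ∃ ψ : Z ⟶ B, φ = ψ ≫ g :=
  Triangle.coyoneda_exact₃ _ hT φ hφ


/-- transfer a Hom-vanishing statement across the shift adjunction (positive direction). -/
lemma aux_shift_pos_zero {P Z : D} (h : ∀ f : P ⟶ Z⟦(-1:ℤ)⟧, f = 0)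
    (g : P⟦(1:ℤ)⟧ ⟶ Z) : g = 0 := by
  have h1 : ((shiftFunctorCompIsoId D (1:ℤ) (-1:ℤ) (by ring)).inv.app P) ≫
      (shiftFunctor D (-1:ℤ)).map g = 0 := h _
  have h2 : (shiftFunctor D (-1:ℤ)).map g = 0 := by
    rw [← cancel_epi ((shiftFunctorCompIsoId D (1:ℤ) (-1:ℤ) (by ring)).inv.app P), h1, comp_zero]
  apply (shiftFunctor D (-1:ℤ)).map_injective
  rw [h2, Functor.map_zero]

/-- transfer a Hom-vanishing statement across the shift adjunction (negative direction). -/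
lemma aux_shift_neg_zero {P Z : D} (h : ∀ g : P⟦(1:ℤ)⟧ ⟶ Z, g = 0)
    (f : P ⟶ Z⟦(-1:ℤ)⟧) : f = 0 := by
  have h1 : (shiftFunctor D (1:ℤ)).map f ≫
      ((shiftFunctorCompIsoId D (-1:ℤ) (1:ℤ) (by ring)).hom.app Z) = 0 := h _
  have h2 : (shiftFunctor D (1:ℤ)).map f = 0 := by
    rw [← cancel_mono ((shiftFunctorCompIsoId D (-1:ℤ) (1:ℤ) (by ring)).hom.app Z), h1, zero_comp]
  apply (shiftFunctor D (1:ℤ)).map_injective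
  rw [h2, Functor.map_zero]

/-- a map into the first object of a distinguished triangle vanishes if its composition with
`mor₁` vanishes and there are no maps to `obj₃⟦-1⟧`. -/
lemma aux_into_obj₁_zero (T : Triangle D) (hT : T ∈ distTriang D) {P : D}
    (h3 : ∀ g : P ⟶ T.obj₃⟦(-1:ℤ)⟧, g = 0) {κ : P ⟶ T.obj₁} (hκ : κ ≫ T.mor₁ = 0) :
    κ = 0 := by
  obtain ⟨g, hg⟩ := Triangle.coyoneda_exact₂ _ (inv_rot_of_distTriang _ hT) κ
    (by exact hκ)
  rw [hg, h3 g]; exact zero_comp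

/-- perpendicularity characterization: right class. -/
lemma aux_mem_right {U V : Set D} (t : IsTorsionPair D U V) {B : D}
    (h : ∀ P ∈ U, ∀ f : P ⟶ B, f = 0) : B ∈ V := by
  obtain ⟨P, Q, f, g, m, hP, hQ, hdist⟩ := t.cover B
  obtain ⟨ζ, hζ⟩ := mk_yoneda_exact₂ D hdist (𝟙 B)
    (by have := h P hP f; simpa [this] using (comp_id f).symm ▸ rfl)
  exact t.addV.summand Q hQ B g ζ hζ.symm

/-- perpendicularity characterization: left class. -/
lemma aux_mem_left {U V : Set D} (t : IsTorsionPair D U V) {B : D}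
    (h : ∀ z ∈ V, ∀ f : B ⟶ z, f = 0) : B ∈ U := by
  obtain ⟨P, Q, f, g, m, hP, hQ, hdist⟩ := t.cover B
  obtain ⟨ζ, hζ⟩ := mk_coyoneda_exact₂ D hdist (𝟙 B)
    (by have := h Q hQ g; simpa [this] using rfl)
  exact t.addU.summand P hP B ζ f hζ.symm

/-- maps out of a star class vanish if both components map to zero. -/
lemma aux_star_out {X Y : Set D} {z : D}
    (hX : ∀ P ∈ X, ∀ f : P ⟶ z, f = 0) (hY : ∀ P ∈ Y, ∀ f : P ⟶ z, f = 0) :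
    ∀ A ∈ starSet D X Y, ∀ f : A ⟶ z, f = 0 := by
  rintro A ⟨B, C, u, v, w, hB, hC, hdist⟩ f
  obtain ⟨ζ, hζ⟩ := mk_yoneda_exact₂ D hdist f (hX B hB _)
  rw [hζ, hY C hC ζ, comp_zero]

/-- maps into a star class vanish if both components receive zero. -/
lemma aux_star_in {X Y : Set D} {P : D}
    (hX : ∀ z ∈ X, ∀ f : P ⟶ z, f = 0) (hY : ∀ z ∈ Y, ∀ f : P ⟶ z, f = 0) :
    ∀ A ∈ starSet D X Y, ∀ f : P ⟶ A, f = 0 := by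
  rintro A ⟨B, C, u, v, w, hB, hC, hdist⟩ f
  obtain ⟨ζ, hζ⟩ := mk_coyoneda_exact₂ D hdist f (hY C hC _)
  rw [hζ, hX B hB ζ, zero_comp]

set_option linter.unusedSectionVars false
set_option linter.unnecessarySimpa false

section Parts
variable {U₁ V₁ U₂ V₂ : Set D}

lemma aux_part1 (t₁ : IsTorsionPair D U₁ V₁) (t₂ : IsTorsionPair D U₂ V₂)
    (h12 : torsLE D U₁ U₂) {U V : Set D} (t : IsTorsionPair D U V)
    (hl : torsLE D U₁ U) (hr : torsLE D U U₂) :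
    IsTorsionPairIn D (U₂ ∩ V₁) (U ∩ V₁) (V ∩ U₂) ∧
      shiftSet D (U ∩ V₁) 1 ⊆ U₂ ∧ shiftSet D (V ∩ U₂) (-1) ⊆ V₁ ∧
      starSet D U₁ (U ∩ V₁) = U ∧ starSet D (V ∩ U₂) V₂ = V := by
  have hVV₁ : V ⊆ V₁ := fun z hz =>
    aux_mem_right D t₁ (fun P hP f => t.hom_zero P (hl.1 hP) z hz f)
  have hV₂V : V₂ ⊆ V := fun z hz =>
    aux_mem_right D t (fun P hP f => t₂.hom_zero P (hr.1 hP) z hz f)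
  refine ⟨?_, ?_, ?_, ?_, ?_⟩
  · exact
      { subT := fun x hx => ⟨hr.1 hx.1, hx.2⟩
        subF := fun x hx => ⟨hx.2, hVV₁ hx.1⟩
        isoT := fun A B e hA _ => ⟨t.addU.iso e hA.1, t₁.addV.iso e hA.2⟩
        isoF := fun A B e hA _ => ⟨t.addV.iso e hA.1, t₂.addU.iso e hA.2⟩
        zeroT := fun Z hZ _ => ⟨t.addU.zero Z hZ, t₁.addV.zero Z hZ⟩
        zeroF := fun Z hZ _ => ⟨t.addV.zero Z hZ, t₂.addU.zero Z hZ⟩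
        sumT := fun A hA B hB => ⟨t.addU.sum A hA.1 B hB.1, t₁.addV.sum A hA.2 B hB.2⟩
        sumF := fun A hA B hB => ⟨t.addV.sum A hA.1 B hB.1, t₂.addU.sum A hA.2 B hB.2⟩
        summandT := fun A hA X i p hip _ =>
          ⟨t.addU.summand A hA.1 X i p hip, t₁.addV.summand A hA.2 X i p hip⟩
        summandF := fun A hA X i p hip _ =>
          ⟨t.addV.summand A hA.1 X i p hip, t₂.addU.summand A hA.2 X i p hip⟩
        hom_zero := fun A hA B hB f => t.hom_zero A hA.1 B hB.1 f
        cover := by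
          rintro A ⟨hAU₂, hAV₁⟩
          obtain ⟨u, v, au, bv, dv, hu, hv, hdist⟩ := t.cover A
          have huV₁ : u ∈ V₁ := by
            apply aux_mem_right D t₁
            intro P hP κ
            exact aux_into_obj₁_zero D _ hdist
              (fun g => aux_shift_neg_zero D
                (fun g' => t.hom_zero _ (hl.2 ⟨P, hP, ⟨Iso.refl _⟩⟩) v hv g') g)
              (t₁.hom_zero P hP A hAV₁ (κ ≫ au))
          have hvU₂ : v ∈ U₂ := by
            apply aux_mem_left D t₂
            intro z hz f
            obtain ⟨ζ, hζ⟩ := mk_yoneda_exact₃ D hdist f (t₂.hom_zero A hAU₂ z hz _)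
            rw [hζ, t₂.hom_zero _ (hr.2 ⟨u, hu, ⟨Iso.refl _⟩⟩) z hz ζ, comp_zero]
          exact ⟨u, v, au, bv, dv, ⟨hu, huV₁⟩, ⟨hv, hvU₂⟩, hdist⟩ }
  · rintro x ⟨z, hz, ⟨e⟩⟩
    exact t₂.addU.iso e.symm (hr.2 ⟨z, hz.1, ⟨Iso.refl _⟩⟩)
  · rintro x ⟨z, hz, ⟨e⟩⟩
    refine t₁.addV.iso e.symm (aux_mem_right D t₁ (fun P hP f => ?_))
    exact aux_shift_neg_zero D
      (fun g => t.hom_zero _ (hl.2 ⟨P, hP, ⟨Iso.refl _⟩⟩) z hz.1 g) f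
  · ext A
    constructor
    · rintro ⟨B, C, u, v, w, hB, hC, hdist⟩
      apply aux_mem_left D t
      intro z hz f
      obtain ⟨ζ, hζ⟩ := mk_yoneda_exact₂ D hdist f (t.hom_zero B (hl.1 hB) z hz _)
      rw [hζ, t.hom_zero C hC.1 z hz ζ, comp_zero]
    · intro hA
      obtain ⟨u₁', w, au, bw, dw, hu₁', hw, hdist⟩ := t₁.cover A
      have hwU : w ∈ U := by
        apply aux_mem_left D t
        intro z hz f
        obtain ⟨ζ, hζ⟩ := mk_yoneda_exact₃ D hdist f (t.hom_zero A hA z hz _)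
        rw [hζ, t.hom_zero _ (hl.2 ⟨u₁', hu₁', ⟨Iso.refl _⟩⟩) z hz ζ, comp_zero]
      exact ⟨u₁', w, au, bw, dw, hu₁', ⟨hwU, hw⟩, hdist⟩
  · ext A
    constructor
    · rintro ⟨B, C, u, v, w, hB, hC, hdist⟩
      apply aux_mem_right D t
      intro P hP f
      obtain ⟨ζ, hζ⟩ := mk_coyoneda_exact₂ D hdist f (t.hom_zero P hP C (hV₂V hC) _)
      rw [hζ, t.hom_zero P hP B hB.1 ζ, zero_comp]
    · intro hA
      obtain ⟨u₂', v₂', au, bv, dv, hu₂', hv₂', hdist⟩ := t₂.cover A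
      have hu₂V : u₂' ∈ V := by
        apply aux_mem_right D t
        intro P hP κ
        exact aux_into_obj₁_zero D _ hdist
          (fun g => aux_shift_neg_zero D
            (fun g' => t₂.hom_zero _ (hr.2 ⟨P, hP, ⟨Iso.refl _⟩⟩) v₂' hv₂' g') g)
          (t.hom_zero P hP A hA (κ ≫ au))
      exact ⟨u₂', v₂', au, bv, dv, ⟨hu₂V, hu₂'⟩, hv₂', hdist⟩

lemma aux_part3 (t₁ : IsTorsionPair D U₁ V₁) (t₂ : IsTorsionPair D U₂ V₂)
    {U V U' V' : Set D} (t : IsTorsionPair D U V) (t' : IsTorsionPair D U' V')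
    (h : torsLE D U U') : torsLEIn D (U ∩ V₁) (V' ∩ U₂) := by
  constructor
  · intro A hA B hB f
    exact t'.hom_zero A (h.1 hA.1) B hB.1 f
  · rintro A hA B ⟨z, hz, ⟨e⟩⟩ f
    have h0 : f ≫ e.hom = 0 := by
      exact aux_shift_neg_zero D
        (fun g => t'.hom_zero _ (h.2 ⟨A, hA.1, ⟨Iso.refl _⟩⟩) z hz.1 g) _
    calc f = (f ≫ e.hom) ≫ e.inv := by simp
    _ = 0 := by rw [h0, zero_comp]

end Parts

section Part2
variable {U₁ V₁ U₂ V₂ : Set D}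

/-- objects of `H` with no maps to `F` lie in `T`. -/
lemma aux_memT {T F : Set D} (hTF : IsTorsionPairIn D (U₂ ∩ V₁) T F) {B : D}
    (hB : B ∈ U₂ ∩ V₁) (h : ∀ v ∈ F, ∀ f : B ⟶ v, f = 0) : B ∈ T := by
  obtain ⟨t0, f0, u, v, w, ht0, hf0, hdist⟩ := hTF.cover B hB
  obtain ⟨ζ, hζ⟩ := mk_coyoneda_exact₂ D hdist (𝟙 B)
    (by have := h f0 hf0 v; simpa [this] using rfl)
  exact hTF.summandT t0 ht0 B ζ u hζ.symm hB

/-- objects of `H` receiving no maps from `T` lie in `F`. -/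
lemma aux_memF {T F : Set D} (hTF : IsTorsionPairIn D (U₂ ∩ V₁) T F) {B : D}
    (hB : B ∈ U₂ ∩ V₁) (h : ∀ P ∈ T, ∀ f : P ⟶ B, f = 0) : B ∈ F := by
  obtain ⟨t0, f0, u, v, w, ht0, hf0, hdist⟩ := hTF.cover B hB
  obtain ⟨ζ, hζ⟩ := mk_yoneda_exact₂ D hdist (𝟙 B)
    (by have := h t0 ht0 u; simpa [this] using rfl)
  exact hTF.summandF f0 hf0 B v ζ hζ.symm hB

/-- characterization of `U₁ * T`: objects with no maps to `F` nor to `V₂`. -/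
lemma aux_C1 (t₁ : IsTorsionPair D U₁ V₁) (t₂ : IsTorsionPair D U₂ V₂)
    (h12 : torsLE D U₁ U₂) {T F : Set D} (hTF : IsTorsionPairIn D (U₂ ∩ V₁) T F)
    (hF1 : shiftSet D F (-1) ⊆ V₁) {A : D}
    (hAF : ∀ v ∈ F, ∀ f : A ⟶ v, f = 0) (hAV : ∀ v ∈ V₂, ∀ f : A ⟶ v, f = 0) :
    A ∈ starSet D U₁ T := by
  obtain ⟨u₁, w, a, b, δ, hu₁, hw, hdist⟩ := t₁.cover A
  have hu2 : (u₁⟦(1:ℤ)⟧) ∈ U₂ := h12.2 ⟨u₁, hu₁, ⟨Iso.refl _⟩⟩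
  have hwU₂ : w ∈ U₂ := by
    apply aux_mem_left D t₂
    intro z hz f
    obtain ⟨ζ, hζ⟩ := mk_yoneda_exact₃ D hdist f (hAV z hz _)
    rw [hζ, t₂.hom_zero _ hu2 z hz ζ, comp_zero]
  have hwF : ∀ v ∈ F, ∀ f : w ⟶ v, f = 0 := by
    intro v hv f
    obtain ⟨ζ, hζ⟩ := mk_yoneda_exact₃ D hdist f (hAF v hv _)
    have hz : ζ = 0 := aux_shift_pos_zero D
      (fun g => t₁.hom_zero _ hu₁ _ (hF1 ⟨v, hv, ⟨Iso.refl _⟩⟩) g) ζ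
    rw [hζ, hz, comp_zero]
  exact ⟨u₁, w, a, b, δ, hu₁, aux_memT D hTF ⟨hwU₂, hw⟩ hwF, hdist⟩

/-- characterization of `F * V₂`: objects receiving no maps from `U₁` nor from `T`. -/
lemma aux_C2 (t₁ : IsTorsionPair D U₁ V₁) (t₂ : IsTorsionPair D U₂ V₂)
    (h12 : torsLE D U₁ U₂) {T F : Set D} (hTF : IsTorsionPairIn D (U₂ ∩ V₁) T F)
    (hT1 : shiftSet D T 1 ⊆ U₂) {A : D}
    (hU : ∀ P ∈ U₁, ∀ f : P ⟶ A, f = 0) (hT : ∀ P ∈ T, ∀ f : P ⟶ A, f = 0) :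
    A ∈ starSet D F V₂ := by
  obtain ⟨u₂, v₂, a, b, δ, hu₂, hv₂, hdist⟩ := t₂.cover A
  have neg : ∀ P : D, (P⟦(1:ℤ)⟧ ∈ U₂) → ∀ f : P ⟶ v₂⟦(-1:ℤ)⟧, f = 0 := fun P hP f =>
    aux_shift_neg_zero D (fun g => t₂.hom_zero _ hP _ hv₂ g) f
  have hu₂V₁ : u₂ ∈ V₁ := by
    apply aux_mem_right D t₁
    intro P hP κ
    exact aux_into_obj₁_zero D _ hdist (neg P (h12.2 ⟨P, hP, ⟨Iso.refl _⟩⟩))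
      (hU P hP (κ ≫ a))
  have hu₂T : ∀ P ∈ T, ∀ κ : P ⟶ u₂, κ = 0 := by
    intro P hP κ
    exact aux_into_obj₁_zero D _ hdist (neg P (hT1 ⟨P, hP, ⟨Iso.refl _⟩⟩))
      (hT P hP (κ ≫ a))
  exact ⟨u₂, v₂, a, b, δ, aux_memF D hTF ⟨hu₂, hu₂V₁⟩ hu₂T, hv₂, hdist⟩

end Part2

section Cover
variable {U₁ V₁ U₂ V₂ : Set D}

/-- The key cover: every object decomposes with respect to `(U₁ * T, F * V₂)`. -/
lemma aux_cover (t₁ : IsTorsionPair D U₁ V₁) (t₂ : IsTorsionPair D U₂ V₂)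
    (h12 : torsLE D U₁ U₂) {T F : Set D} (hTF : IsTorsionPairIn D (U₂ ∩ V₁) T F)
    (hT1 : shiftSet D T 1 ⊆ U₂) (hF1 : shiftSet D F (-1) ⊆ V₁) (A : D) :
    A ∈ starSet D (starSet D U₁ T) (starSet D F V₂) := by
  -- Step 1 : t₁-decomposition of A
  obtain ⟨u₁, w, a, b, δ, hu₁, hw, hTA⟩ := t₁.cover A
  -- Step 2 : t₂-decomposition of w
  obtain ⟨u', v', d, e, γ, hu', hv', hT2⟩ := t₂.cover w
  -- Step 3 : u' ∈ V₁, hence u' ∈ H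
  have hu'V₁ : u' ∈ V₁ := by
    apply aux_mem_right D t₁
    intro P hP κ
    exact aux_into_obj₁_zero D _ hT2
      (fun g => aux_shift_neg_zero D
        (fun g' => t₂.hom_zero _ (h12.2 ⟨P, hP, ⟨Iso.refl _⟩⟩) v' hv' g') g)
      (t₁.hom_zero P hP w hw (κ ≫ d))
  -- Step 4 : (T,F)-decomposition of u'
  obtain ⟨t0, f0, g, h, ι, ht0, hf0, hT3⟩ := hTF.cover u' ⟨hu', hu'V₁⟩
  have hsubU₂ : ∀ P ∈ T, P ∈ U₂ := fun x hx => (hTF.subT hx).1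
  have hPv' : ∀ (P : D), P ∈ U₁ ∨ P ∈ T → ∀ f : P ⟶ v', f = 0 := by
    rintro P (hP | hP) f
    · exact t₂.hom_zero P (h12.1 hP) v' hv' f
    · exact t₂.hom_zero P (hsubU₂ P hP) v' hv' f
  have hPf0 : ∀ (P : D), P ∈ U₁ ∨ P ∈ T → ∀ f : P ⟶ f0, f = 0 := by
    rintro P (hP | hP) f
    · exact t₁.hom_zero P hP f0 (hTF.subF hf0).2 f
    · exact hTF.hom_zero P hP f0 hf0 f
  -- Step 5 : cone over m := g ≫ d
  set m : t0 ⟶ w := g ≫ d with hm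
  obtain ⟨Y₀, qw, rw', hT5⟩ := distinguished_cocone_triangle m
  have z512 : m ≫ qw = 0 := comp_distTriang_mor_zero₁₂ _ hT5
  have z531 : rw' ≫ m⟦(1:ℤ)⟧' = 0 := comp_distTriang_mor_zero₃₁ _ hT5
  have zA23 : b ≫ δ = 0 := comp_distTriang_mor_zero₂₃ _ hTA
  -- factorization of maps from T into w through m
  have factT : ∀ (P : D), P ∈ T → ∀ η : P ⟶ w, ∃ η₂ : P ⟶ t0, η = η₂ ≫ m := by
    intro P hP η
    obtain ⟨η₁, hη₁⟩ := mk_coyoneda_exact₂ D hT2 η (hPv' P (Or.inr hP) _)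
    replace hη₁ : η = η₁ ≫ d := hη₁
    obtain ⟨η₂, hη₂⟩ := mk_coyoneda_exact₂ D hT3 η₁ (hTF.hom_zero P hP f0 hf0 _)
    replace hη₂ : η₁ = η₂ ≫ g := hη₂
    exact ⟨η₂, by rw [hη₁, hη₂, hm, assoc]⟩
  -- Step 6 : no maps from U₁ ∪ T into Y₀
  have hY₀ : ∀ (P : D), P ∈ U₁ ∨ P ∈ T → ∀ ξ : P ⟶ Y₀, ξ = 0 := by
    intro P hP ξ
    have hρm : (ξ ≫ rw') ≫ m⟦(1:ℤ)⟧' = 0 := by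
      rw [assoc, z531, comp_zero]
    have hσ₁ : ((ξ ≫ rw') ≫ g⟦(1:ℤ)⟧') ≫ d⟦(1:ℤ)⟧' = 0 := by
      rw [assoc, ← Functor.map_comp, ← hm]
      exact hρm
    obtain ⟨ζ, hζ⟩ := mk_coyoneda_exact₁ D hT2 ((ξ ≫ rw') ≫ g⟦(1:ℤ)⟧') hσ₁
    replace hζ : (ξ ≫ rw') ≫ g⟦(1:ℤ)⟧' = ζ ≫ γ := hζ
    have hζ0 : (ξ ≫ rw') ≫ g⟦(1:ℤ)⟧' = 0 := by
      rw [hζ, hPv' P hP ζ, zero_comp]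
    obtain ⟨ζ', hζ'⟩ := mk_coyoneda_exact₁ D hT3 (ξ ≫ rw') hζ0
    replace hζ' : ξ ≫ rw' = ζ' ≫ ι := hζ'
    have hρ0 : ξ ≫ rw' = 0 := by rw [hζ', hPf0 P hP ζ', zero_comp]
    obtain ⟨η, hη⟩ := mk_coyoneda_exact₃ D hT5 ξ hρ0
    replace hη : ξ = η ≫ qw := hη
    rcases hP with hP | hP
    · rw [hη, t₁.hom_zero P hP w hw η, zero_comp]
    · obtain ⟨η₂, hη₂⟩ := factT P hP η
      rw [hη, hη₂, assoc, z512, comp_zero]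
  -- Step 7 : the extension X of t0 by u₁ along ε := m ≫ δ
  obtain ⟨X, x, y', hTX⟩ := distinguished_cocone_triangle₂ (m ≫ δ)
  -- Step 8 : the comparison map φ : X ⟶ A
  obtain ⟨φ, hφ₁, hφ₂⟩ : ∃ φ : X ⟶ A, x ≫ φ = 𝟙 u₁ ≫ a ∧ y' ≫ m = φ ≫ b :=
    complete_distinguished_triangle_morphism₂
      (Triangle.mk x y' (m ≫ δ)) (Triangle.mk a b δ) hTX hTA (𝟙 u₁) m
      (by change (m ≫ δ) ≫ (𝟙 u₁)⟦(1:ℤ)⟧' = m ≫ δ; rw [CategoryTheory.Functor.map_id, comp_id])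
  have hxφ : x ≫ φ = a := by simpa using hφ₁
  have hφ₂' : y' ≫ m = φ ≫ b := hφ₂
  have zX31 : (m ≫ δ) ≫ x⟦(1:ℤ)⟧' = 0 := comp_distTriang_mor_zero₃₁ _ hTX
  have zX31' : m ≫ δ ≫ x⟦(1:ℤ)⟧' = 0 := by rw [← assoc]; exact zX31
  -- Step 9 : the cone Y of φ
  obtain ⟨Y, q, r, hT6⟩ := distinguished_cocone_triangle φ
  have z612 : φ ≫ q = 0 := comp_distTriang_mor_zero₁₂ _ hT6
  have z631 : r ≫ φ⟦(1:ℤ)⟧' = 0 := comp_distTriang_mor_zero₃₁ _ hT6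
  have haq : a ≫ q = 0 := by
    rw [← hxφ, assoc, z612, comp_zero]
  -- Step 10 : no maps from U₁ ∪ T into Y
  have hY : ∀ (P : D), P ∈ U₁ ∨ P ∈ T → ∀ ξ : P ⟶ Y, ξ = 0 := by
    intro P hP ξ
    have hρφ : (ξ ≫ r) ≫ φ⟦(1:ℤ)⟧' = 0 := by
      rw [assoc, z631, comp_zero]
    have hcomm : y'⟦(1:ℤ)⟧' ≫ m⟦(1:ℤ)⟧' = φ⟦(1:ℤ)⟧' ≫ b⟦(1:ℤ)⟧' := by
      rw [← Functor.map_comp, ← Functor.map_comp, hφ₂']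
    have hσm : ((ξ ≫ r) ≫ y'⟦(1:ℤ)⟧') ≫ m⟦(1:ℤ)⟧' = 0 := by
      rw [assoc, hcomm, ← assoc, hρφ, zero_comp]
    obtain ⟨σ', hσ'⟩ := mk_coyoneda_exact₁ D hT5 ((ξ ≫ r) ≫ y'⟦(1:ℤ)⟧') hσm
    replace hσ' : (ξ ≫ r) ≫ y'⟦(1:ℤ)⟧' = σ' ≫ rw' := hσ'
    have hσ0 : (ξ ≫ r) ≫ y'⟦(1:ℤ)⟧' = 0 := by
      rw [hσ', hY₀ P hP σ', zero_comp]
    obtain ⟨ρ₃, hρ₃⟩ : ∃ ρ₃ : P ⟶ u₁⟦(1:ℤ)⟧, ξ ≫ r = ρ₃ ≫ (-(x⟦(1:ℤ)⟧')) :=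
        Triangle.coyoneda_exact₁ _ (rot_of_distTriang _ hTX) (ξ ≫ r)
      (by exact hσ0)
    replace hρ₃ : ξ ≫ r = ρ₃ ≫ (-(x⟦(1:ℤ)⟧')) := by
      simpa only [Triangle.rotate_mor₃, Triangle.mk_mor₁] using hρ₃
    have hρ₃' : ξ ≫ r = -(ρ₃ ≫ x⟦(1:ℤ)⟧') := by
      rw [hρ₃, Preadditive.comp_neg]
    have hρ₃a : ρ₃ ≫ a⟦(1:ℤ)⟧' = 0 := by
      have h2 := hρφ
      rw [hρ₃'] at h2
      simp only [Preadditive.neg_comp, neg_eq_zero, assoc, ← Functor.map_comp] at h2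
      rw [hxφ] at h2
      exact h2
    obtain ⟨ρ₄, hρ₄⟩ := mk_coyoneda_exact₁ D hTA ρ₃ hρ₃a
    replace hρ₄ : ρ₃ = ρ₄ ≫ δ := hρ₄
    have hρ0 : ξ ≫ r = 0 := by
      rcases hP with hP | hP
      · rw [hρ₃', hρ₄, t₁.hom_zero P hP w hw ρ₄, zero_comp, zero_comp, neg_zero]
      · obtain ⟨η₂, hη₂⟩ := factT P hP ρ₄
        rw [hρ₃', hρ₄, hη₂, neg_eq_zero]
        simp only [assoc]
        rw [zX31', comp_zero]
    obtain ⟨η, hη⟩ : ∃ η : P ⟶ A, ξ = η ≫ q := mk_coyoneda_exact₃ D hT6 ξ hρ0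
    rcases hP with hP | hP
    · obtain ⟨σ₅, hσ₅⟩ := mk_coyoneda_exact₂ D hTA η (t₁.hom_zero P hP w hw _)
      replace hσ₅ : η = σ₅ ≫ a := hσ₅
      rw [hη, hσ₅, assoc, haq, comp_zero]
    · obtain ⟨η₃, hη₃⟩ := factT P hP (η ≫ b)
      have hη₃ε : η₃ ≫ (m ≫ δ) = 0 := by
        rw [← assoc, ← hη₃, assoc, zA23, comp_zero]
      obtain ⟨ζ, hζ⟩ : ∃ ζ : P ⟶ X, η₃ = ζ ≫ y' := mk_coyoneda_exact₃ D hTX η₃ hη₃ε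
      have hdiff : (η - ζ ≫ φ) ≫ b = 0 := by
        have e1 : (ζ ≫ φ) ≫ b = η₃ ≫ m := by
          rw [assoc, ← hφ₂', ← assoc ζ y' m, ← hζ]
        rw [Preadditive.sub_comp, hη₃, e1, sub_self]
      obtain ⟨σ₆, hσ₆⟩ := mk_coyoneda_exact₂ D hTA (η - ζ ≫ φ) hdiff
      replace hσ₆ : η - ζ ≫ φ = σ₆ ≫ a := hσ₆
      have hηeq : η = σ₆ ≫ a + ζ ≫ φ := by rw [← hσ₆]; abel
      rw [hη, hηeq, Preadditive.add_comp, assoc, assoc, haq, comp_zero, z612, comp_zero, add_zero]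
  -- Step 11 : conclude
  have hX : X ∈ starSet D U₁ T := ⟨u₁, t0, x, y', m ≫ δ, hu₁, ht0, hTX⟩
  have hYW : Y ∈ starSet D F V₂ := aux_C2 D t₁ t₂ h12 hTF hT1
    (fun P hP f => hY P (Or.inl hP) f) (fun P hP f => hY P (Or.inr hP) f)
  exact ⟨X, Y, φ, q, r, hX, hYW, hT6⟩

end Cover

section Assemble
variable {U₁ V₁ U₂ V₂ : Set D}

lemma aux_part2 (t₁ : IsTorsionPair D U₁ V₁) (t₂ : IsTorsionPair D U₂ V₂)
    (h12 : torsLE D U₁ U₂) {T F : Set D} (hTF : IsTorsionPairIn D (U₂ ∩ V₁) T F)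
    (hT1 : shiftSet D T 1 ⊆ U₂) (hF1 : shiftSet D F (-1) ⊆ V₁) :
    IsTorsionPair D (starSet D U₁ T) (starSet D F V₂) ∧
      torsLE D U₁ (starSet D U₁ T) ∧ torsLE D (starSet D U₁ T) U₂ ∧
      starSet D U₁ T ∩ V₁ = T ∧ starSet D F V₂ ∩ U₂ = F := by
  have hFV₁ : ∀ v ∈ F, v ∈ V₁ := fun v hv => (hTF.subF hv).2
  have hTU₂ : ∀ x ∈ T, x ∈ U₂ := fun x hx => (hTF.subT hx).1
  have hV₂V₁ : ∀ z ∈ V₂, z ∈ V₁ := fun z hz =>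
    aux_mem_right D t₁ (fun P hP f => t₂.hom_zero P (h12.1 hP) z hz f)
  have hSoutF : ∀ v ∈ F, ∀ A ∈ starSet D U₁ T, ∀ f : A ⟶ v, f = 0 := fun v hv =>
    aux_star_out D (fun P hP f => t₁.hom_zero P hP v (hFV₁ v hv) f)
      (fun P hP f => hTF.hom_zero P hP v hv f)
  have hSoutV₂ : ∀ z ∈ V₂, ∀ A ∈ starSet D U₁ T, ∀ f : A ⟶ z, f = 0 := fun z hz =>
    aux_star_out D (fun P hP f => t₁.hom_zero P hP z (hV₂V₁ z hz) f)
      (fun P hP f => t₂.hom_zero P (hTU₂ P hP) z hz f)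
  have hS'inU₁ : ∀ P ∈ U₁, ∀ A ∈ starSet D F V₂, ∀ f : P ⟶ A, f = 0 := fun P hP =>
    aux_star_in D (fun v hv f => t₁.hom_zero P hP v (hFV₁ v hv) f)
      (fun z hz f => t₁.hom_zero P hP z (hV₂V₁ z hz) f)
  have hS'inT : ∀ P ∈ T, ∀ A ∈ starSet D F V₂, ∀ f : P ⟶ A, f = 0 := fun P hP =>
    aux_star_in D (fun v hv f => hTF.hom_zero P hP v hv f)
      (fun z hz f => t₂.hom_zero P (hTU₂ P hP) z hz f)
  have memS : ∀ {A : D}, (∀ v ∈ F, ∀ f : A ⟶ v, f = 0) →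
      (∀ z ∈ V₂, ∀ f : A ⟶ z, f = 0) → A ∈ starSet D U₁ T :=
    fun hA hA' => aux_C1 D t₁ t₂ h12 hTF hF1 hA hA'
  have memS' : ∀ {A : D}, (∀ P ∈ U₁, ∀ f : P ⟶ A, f = 0) →
      (∀ P ∈ T, ∀ f : P ⟶ A, f = 0) → A ∈ starSet D F V₂ :=
    fun hA hA' => aux_C2 D t₁ t₂ h12 hTF hT1 hA hA'
  have addS : AdditiveClosed D (starSet D U₁ T) := by
    constructor
    · intro A B e hA
      apply memS <;> intro v hv f
      · have h0 : e.hom ≫ f = 0 := hSoutF v hv A hA _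
        calc f = e.inv ≫ (e.hom ≫ f) := by simp
        _ = 0 := by rw [h0, comp_zero]
      · have h0 : e.hom ≫ f = 0 := hSoutV₂ v hv A hA _
        calc f = e.inv ≫ (e.hom ≫ f) := by simp
        _ = 0 := by rw [h0, comp_zero]
    · intro Z hZ
      apply memS <;> intro v hv f <;> exact hZ.eq_of_src f 0
    · intro A hA B hB
      apply memS <;> intro v hv f <;> apply biprod.hom_ext' <;> rw [comp_zero]
      · exact hSoutF v hv A hA _
      · exact hSoutF v hv B hB _
      · exact hSoutV₂ v hv A hA _
      · exact hSoutV₂ v hv B hB _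
    · intro A hA X i p hip
      apply memS <;> intro v hv f
      · have h0 : p ≫ f = 0 := hSoutF v hv A hA _
        calc f = i ≫ (p ≫ f) := by rw [← assoc, hip, id_comp]
        _ = 0 := by rw [h0, comp_zero]
      · have h0 : p ≫ f = 0 := hSoutV₂ v hv A hA _
        calc f = i ≫ (p ≫ f) := by rw [← assoc, hip, id_comp]
        _ = 0 := by rw [h0, comp_zero]
  have addS' : AdditiveClosed D (starSet D F V₂) := by
    constructor
    · intro A B e hA
      apply memS' <;> intro P hP f
      · have h0 : f ≫ e.inv = 0 := hS'inU₁ P hP A hA _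
        calc f = (f ≫ e.inv) ≫ e.hom := by simp
        _ = 0 := by rw [h0, zero_comp]
      · have h0 : f ≫ e.inv = 0 := hS'inT P hP A hA _
        calc f = (f ≫ e.inv) ≫ e.hom := by simp
        _ = 0 := by rw [h0, zero_comp]
    · intro Z hZ
      apply memS' <;> intro P hP f <;> exact hZ.eq_of_tgt f 0
    · intro A hA B hB
      apply memS' <;> intro P hP f <;> apply biprod.hom_ext <;> rw [zero_comp]
      · exact hS'inU₁ P hP A hA _
      · exact hS'inU₁ P hP B hB _
      · exact hS'inT P hP A hA _
      · exact hS'inT P hP B hB _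
    · intro A hA X i p hip
      apply memS' <;> intro P hP f
      · have h0 : f ≫ i = 0 := hS'inU₁ P hP A hA _
        calc f = (f ≫ i) ≫ p := by rw [assoc, hip, comp_id]
        _ = 0 := by rw [h0, zero_comp]
      · have h0 : f ≫ i = 0 := hS'inT P hP A hA _
        calc f = (f ≫ i) ≫ p := by rw [assoc, hip, comp_id]
        _ = 0 := by rw [h0, zero_comp]
  refine ⟨⟨addS, addS', ?_, aux_cover D t₁ t₂ h12 hTF hT1 hF1⟩, ⟨?_, ?_⟩, ⟨?_, ?_⟩, ?_, ?_⟩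
  · intro A hA B hB f
    exact aux_star_in D (fun v hv g => hSoutF v hv A hA g)
      (fun z hz g => hSoutV₂ z hz A hA g) B hB f
  · intro u hu
    exact memS (fun v hv f => t₁.hom_zero u hu v (hFV₁ v hv) f)
      (fun z hz f => t₁.hom_zero u hu z (hV₂V₁ z hz) f)
  · rintro x ⟨z, hz, ⟨e⟩⟩
    apply memS <;> intro v hv f
    · have hg : e.inv ≫ f = 0 := aux_shift_pos_zero D
        (fun f' => t₁.hom_zero z hz _ (hF1 ⟨v, hv, ⟨Iso.refl _⟩⟩) f') _
      calc f = e.hom ≫ (e.inv ≫ f) := by simp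
      _ = 0 := by rw [hg, comp_zero]
    · have hg : e.inv ≫ f = 0 :=
        t₂.hom_zero _ (h12.2 ⟨z, hz, ⟨Iso.refl _⟩⟩) v hv _
      calc f = e.hom ≫ (e.inv ≫ f) := by simp
      _ = 0 := by rw [hg, comp_zero]
  · intro A hA
    exact aux_mem_left D t₂ (fun z hz f => hSoutV₂ z hz A hA f)
  · rintro x ⟨z, hz, ⟨e⟩⟩
    apply aux_mem_left D t₂
    intro vv hvv f
    have hg : e.inv ≫ f = 0 := aux_shift_pos_zero D
      (fun f' => aux_star_out D
        (fun P hP g => aux_shift_neg_zero D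
          (fun g' => t₂.hom_zero _ (h12.2 ⟨P, hP, ⟨Iso.refl _⟩⟩) vv hvv g') g)
        (fun P hP g => aux_shift_neg_zero D
          (fun g' => t₂.hom_zero _ (hT1 ⟨P, hP, ⟨Iso.refl _⟩⟩) vv hvv g') g) z hz f') _
    calc f = e.hom ≫ (e.inv ≫ f) := by simp
    _ = 0 := by rw [hg, comp_zero]
  · ext x
    constructor
    · rintro ⟨⟨B, C, u, v, w, hB, hC, hdist⟩, hxV₁⟩
      have hu0 : u = 0 := t₁.hom_zero B hB x hxV₁ u
      obtain ⟨ζ, hζ⟩ := mk_yoneda_exact₂ D hdist (𝟙 x)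
        (by have := hu0; simpa [this] using rfl)
      have hxU₂ : x ∈ U₂ := aux_mem_left D t₂
        (fun z hz f => hSoutV₂ z hz x ⟨B, C, u, v, w, hB, hC, hdist⟩ f)
      exact hTF.summandT C hC x v ζ hζ.symm ⟨hxU₂, hxV₁⟩
    · intro hx
      exact ⟨memS (fun v hv f => hTF.hom_zero x hx v hv f)
        (fun z hz f => t₂.hom_zero x (hTU₂ x hx) z hz f), (hTF.subT hx).2⟩
  · ext x
    constructor
    · rintro ⟨⟨B, C, u, v, w, hB, hC, hdist⟩, hxU₂⟩
      have hv0 : v = 0 := t₂.hom_zero x hxU₂ C hC v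
      obtain ⟨ζ, hζ⟩ := mk_coyoneda_exact₂ D hdist (𝟙 x)
        (by have := hv0; simpa [this] using rfl)
      have hxV₁ : x ∈ V₁ := aux_mem_right D t₁
        (fun P hP f => hS'inU₁ P hP x ⟨B, C, u, v, w, hB, hC, hdist⟩ f)
      exact hTF.summandF B hB x ζ u hζ.symm ⟨hxU₂, hxV₁⟩
    · intro hx
      exact ⟨memS' (fun P hP f => t₁.hom_zero P hP x (hFV₁ x hx) f)
        (fun P hP f => hTF.hom_zero P hP x hx f), (hTF.subF hx).1⟩

lemma aux_part4 (t₁ : IsTorsionPair D U₁ V₁) (t₂ : IsTorsionPair D U₂ V₂)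
    (h12 : torsLE D U₁ U₂) {T F T' F' : Set D}
    (hTF : IsTorsionPairIn D (U₂ ∩ V₁) T F) (hTF' : IsTorsionPairIn D (U₂ ∩ V₁) T' F')
    (hT1 : shiftSet D T 1 ⊆ U₂) (hF'1 : shiftSet D F' (-1) ⊆ V₁)
    (hle : torsLEIn D T F') :
    torsLE D (starSet D U₁ T) (starSet D U₁ T') := by
  have hF'V₁ : ∀ v ∈ F', v ∈ V₁ := fun v hv => (hTF'.subF hv).2
  have hTU₂ : ∀ x ∈ T, x ∈ U₂ := fun x hx => (hTF.subT hx).1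
  have hV₂V₁ : ∀ z ∈ V₂, z ∈ V₁ := fun z hz =>
    aux_mem_right D t₁ (fun P hP f => t₂.hom_zero P (h12.1 hP) z hz f)
  constructor
  · intro A hA
    apply aux_C1 D t₁ t₂ h12 hTF' hF'1
    · intro v hv f
      exact aux_star_out D (fun P hP g => t₁.hom_zero P hP v (hF'V₁ v hv) g)
        (fun P hP g => hle.1 P hP v hv g) A hA f
    · intro z hz f
      exact aux_star_out D (fun P hP g => t₁.hom_zero P hP z (hV₂V₁ z hz) g)
        (fun P hP g => t₂.hom_zero P (hTU₂ P hP) z hz g) A hA f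
  · rintro x ⟨z, hz, ⟨e⟩⟩
    apply aux_C1 D t₁ t₂ h12 hTF' hF'1 <;> intro v hv f
    · have hg : e.inv ≫ f = 0 := aux_shift_pos_zero D
        (fun f' => aux_star_out D
          (fun P hP g => t₁.hom_zero P hP _ (hF'1 ⟨v, hv, ⟨Iso.refl _⟩⟩) g)
          (fun P hP g => hle.2 P hP _ ⟨v, hv, ⟨Iso.refl _⟩⟩ g) z hz f') _
      calc f = e.hom ≫ (e.inv ≫ f) := by simp
      _ = 0 := by rw [hg, comp_zero]
    · have hg : e.inv ≫ f = 0 := aux_shift_pos_zero D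
        (fun f' => aux_star_out D
          (fun P hP g => aux_shift_neg_zero D
            (fun g' => t₂.hom_zero _ (h12.2 ⟨P, hP, ⟨Iso.refl _⟩⟩) v hv g') g)
          (fun P hP g => aux_shift_neg_zero D
            (fun g' => t₂.hom_zero _ (hT1 ⟨P, hP, ⟨Iso.refl _⟩⟩) v hv g') g) z hz f') _
      calc f = e.hom ≫ (e.inv ≫ f) := by simp
      _ = 0 := by rw [hg, comp_zero]

end Assemble

end AuxLemmas

/-- Theorem 3.8 / Corollary 3.10 (1): `Φ(𝒰,𝒱) = (𝒰 ∩ 𝒱₁, 𝒱 ∩ 𝒰₂)`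
and `Ψ(𝒯,ℱ) = (𝒰₁ * 𝒯, ℱ * 𝒱₂)` are mutually inverse, order preserving bijections
between torsion pairs `t` in `D` with `t₁ ≼ t ≼ t₂` and torsion pairs `(𝒯,ℱ)` in
`ℋ = 𝒰₂ ∩ 𝒱₁` with `𝒯[1] ⊆ 𝒰₂` and `ℱ[-1] ⊆ 𝒱₁`. -/
theorem stmt3 (U₁ V₁ U₂ V₂ : Set D)
    (t₁ : IsTorsionPair D U₁ V₁) (t₂ : IsTorsionPair D U₂ V₂)
    (h12 : torsLE D U₁ U₂) :
    -- Φ is well defined and Ψ ∘ Φ = id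
    (∀ U V, IsTorsionPair D U V → torsLE D U₁ U → torsLE D U U₂ →
       IsTorsionPairIn D (U₂ ∩ V₁) (U ∩ V₁) (V ∩ U₂) ∧
       shiftSet D (U ∩ V₁) 1 ⊆ U₂ ∧ shiftSet D (V ∩ U₂) (-1) ⊆ V₁ ∧
       starSet D U₁ (U ∩ V₁) = U ∧ starSet D (V ∩ U₂) V₂ = V) ∧
    -- Ψ is well defined and Φ ∘ Ψ = id
    (∀ T F, IsTorsionPairIn D (U₂ ∩ V₁) T F →
       shiftSet D T 1 ⊆ U₂ → shiftSet D F (-1) ⊆ V₁ →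
       IsTorsionPair D (starSet D U₁ T) (starSet D F V₂) ∧
       torsLE D U₁ (starSet D U₁ T) ∧ torsLE D (starSet D U₁ T) U₂ ∧
       starSet D U₁ T ∩ V₁ = T ∧ starSet D F V₂ ∩ U₂ = F) ∧
    -- Φ preserves the orders
    (∀ U V U' V', IsTorsionPair D U V → IsTorsionPair D U' V' →
       torsLE D U₁ U → torsLE D U U₂ → torsLE D U₁ U' → torsLE D U' U₂ →
       torsLE D U U' → torsLEIn D (U ∩ V₁) (V' ∩ U₂)) ∧
    -- Ψ preserves the orders
    (∀ T F T' F', IsTorsionPairIn D (U₂ ∩ V₁) T F → IsTorsionPairIn D (U₂ ∩ V₁) T' F' →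
       shiftSet D T 1 ⊆ U₂ → shiftSet D F (-1) ⊆ V₁ →
       shiftSet D T' 1 ⊆ U₂ → shiftSet D F' (-1) ⊆ V₁ →
       torsLEIn D T F' → torsLE D (starSet D U₁ T) (starSet D U₁ T')) := by
  refine ⟨fun U V t hl hr => aux_part1 D t₁ t₂ h12 t hl hr,
    fun T F hTF hT1 hF1 => aux_part2 D t₁ t₂ h12 hTF hT1 hF1,
    fun U V U' V' t t' _ _ _ _ h => aux_part3 D t₁ t₂ t t' h,
    fun T F T' F' hTF hTF' hT1 _ _ hF'1 hle =>
      aux_part4 D t₁ t₂ h12 hTF hTF' hT1 hF'1 hle⟩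
end

section
/- Let D be a triangulated category and let t1 = (𝒰1,𝒱1), t2 = (𝒰2,𝒱2) be torsion pairs in D with t1 ≼ t2, and set ℋ = 𝒰2 ∩ 𝒱1. Then the assignments φ(D^{≤0}, D^{≥0}) = (D^{≤0} ∩ 𝒱1, D^{≥1} ∩ 𝒰2) and ψ(𝒯,ℱ) = (𝒰1 * 𝒯, ℱ[1] * 𝒱2[1]) are mutually inverse, order preserving bijections between the set of t-structures (D^{≤0}, D^{≥0}) on D with 𝒰1 ⊆ D^{≤0} ⊆ 𝒰2 and the set of s-torsion pairs (𝒯,ℱ) in ℋ satisfying 𝒯[1] ⊆ 𝒰2 and ℱ[-1] ⊆ 𝒱1. -/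
open CategoryTheory Category Limits Pretriangulated

universe v u

variable (D : Type u) [Category.{v} D] [Preadditive D] [HasZeroObject D]
  [HasShift D ℤ] [∀ n : ℤ, (shiftFunctor D n).Additive]
  [Pretriangulated D] [HasBinaryBiproducts D]

namespace Stmt4Proof
set_option linter.unusedSectionVars false

variable {D : Type u} [Category.{v} D] [Preadditive D] [HasZeroObject D]
  [HasShift D ℤ] [∀ n : ℤ, (shiftFunctor D n).Additive]
  [Pretriangulated D] [HasBinaryBiproducts D]

/-! ### shift utilities -/

noncomputable def sns (A : D) : A⟦(1:ℤ)⟧⟦(-1:ℤ)⟧ ≅ A :=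
  (shiftFunctorCompIsoId D (1:ℤ) (-1:ℤ) (by ring)).app A

noncomputable def nss (A : D) : A⟦(-1:ℤ)⟧⟦(1:ℤ)⟧ ≅ A :=
  (shiftFunctorCompIsoId D (-1:ℤ) (1:ℤ) (by ring)).app A

lemma shift_map_zero {A B : D} (n : ℤ) (h : ∀ f : A ⟶ B, f = 0)
    (g : A⟦n⟧ ⟶ B⟦n⟧) : g = 0 := by
  obtain ⟨f, rfl⟩ := (shiftFunctor D n).map_surjective g
  rw [h f, Functor.map_zero]

lemma hom_to_shift_neg_zero {A B : D} (h : ∀ g : A⟦(1:ℤ)⟧ ⟶ B, g = 0)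
    (f : A ⟶ B⟦(-1:ℤ)⟧) : f = 0 := by
  apply (shiftFunctor D (1:ℤ)).map_injective
  rw [Functor.map_zero]
  have h1 : f⟦(1:ℤ)⟧' ≫ (nss B).hom = 0 := h _
  rw [← comp_id (f⟦(1:ℤ)⟧'), ← (nss B).hom_inv_id, ← assoc, h1, zero_comp]

lemma hom_from_shift_one_zero {A B : D} (h : ∀ g : A ⟶ B⟦(-1:ℤ)⟧, g = 0)
    (f : A⟦(1:ℤ)⟧ ⟶ B) : f = 0 := by
  apply (shiftFunctor D (-1:ℤ)).map_injective
  rw [Functor.map_zero]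
  have h1 : (sns A).inv ≫ f⟦(-1:ℤ)⟧' = 0 := h _
  rw [← id_comp (f⟦(-1:ℤ)⟧'), ← (sns A).hom_inv_id, assoc, h1, comp_zero]

/-! ### starSet utilities -/

lemma mem_starSet_of_triangle {X Y : Set D} (T : Triangle D) (hT : T ∈ distTriang D)
    (h1 : T.obj₁ ∈ X) (h3 : T.obj₃ ∈ Y) : T.obj₂ ∈ starSet D X Y :=
  ⟨T.obj₁, T.obj₃, T.mor₁, T.mor₂, T.mor₃, h1, h3, hT⟩

lemma mem_starSet_iso {X Y : Set D} (T : Triangle D) (hT : T ∈ distTriang D)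
    {B' A' C' : D} (e1 : T.obj₁ ≅ B') (e2 : T.obj₂ ≅ A') (e3 : T.obj₃ ≅ C')
    (h1 : B' ∈ X) (h3 : C' ∈ Y) : A' ∈ starSet D X Y := by
  refine ⟨B', C', e1.inv ≫ T.mor₁ ≫ e2.hom, e2.inv ≫ T.mor₂ ≫ e3.hom,
    e3.inv ≫ T.mor₃ ≫ (e1.hom⟦(1:ℤ)⟧'), h1, h3, ?_⟩
  refine isomorphic_distinguished _ hT _ ?_
  refine Triangle.isoMk _ _ e1.symm e2.symm e3.symm ?_ ?_ ?_
  · dsimp; simp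
    erw [assoc, assoc, Iso.hom_inv_id, comp_id]
  · dsimp; simp
    erw [assoc, assoc, Iso.hom_inv_id, comp_id]
  · dsimp
    simp [← Functor.map_comp]
    erw [assoc, assoc, ← Functor.map_comp, Iso.hom_inv_id, CategoryTheory.Functor.map_id, comp_id]

lemma starSet_isoClosed {X Y : Set D} : isoClosed D (starSet D X Y) := by
  rintro A B e ⟨P, Q, m1, m2, m3, hP, hQ, hd⟩
  exact mem_starSet_iso _ hd (Iso.refl _) e (Iso.refl _) hP hQ

lemma starSet_mono {X X' Y Y' : Set D} (hX : X ⊆ X') (hY : Y ⊆ Y') :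
    starSet D X Y ⊆ starSet D X' Y' := by
  rintro A ⟨B, C, m1, m2, m3, hB, hC, hd⟩
  exact ⟨B, C, m1, m2, m3, hX hB, hY hC, hd⟩

lemma mem_starSet_left {X Y : Set D} (hY : ∀ Z : D, IsZero Z → Z ∈ Y) {A : D}
    (hA : A ∈ X) : A ∈ starSet D X Y :=
  mem_starSet_of_triangle _ (contractible_distinguished A) hA (hY _ (isZero_zero D))

lemma mem_starSet_right {X Y : Set D} (hX : ∀ Z : D, IsZero Z → Z ∈ X) {A : D}
    (hA : A ∈ Y) : A ∈ starSet D X Y :=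
  mem_starSet_of_triangle _ (contractible_distinguished₁ A) (hX _ (isZero_zero D)) hA

lemma homZero_from_star {P : D} {X Y : Set D}
    (hX : ∀ B ∈ X, ∀ f : B ⟶ P, f = 0) (hY : ∀ C ∈ Y, ∀ f : C ⟶ P, f = 0) :
    ∀ A ∈ starSet D X Y, ∀ f : A ⟶ P, f = 0 := by
  rintro A ⟨B, C, m1, m2, m3, hB, hC, hd⟩ f
  obtain ⟨g, hg⟩ := Triangle.yoneda_exact₂ _ hd f (hX B hB (m1 ≫ f))
  rw [hg, hY C hC g]; exact comp_zero

lemma homZero_to_star {P : D} {X Y : Set D}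
    (hX : ∀ B ∈ X, ∀ f : P ⟶ B, f = 0) (hY : ∀ C ∈ Y, ∀ f : P ⟶ C, f = 0) :
    ∀ A ∈ starSet D X Y, ∀ f : P ⟶ A, f = 0 := by
  rintro A ⟨B, C, m1, m2, m3, hB, hC, hd⟩ f
  obtain ⟨g, hg⟩ := Triangle.coyoneda_exact₂ _ hd f (hY C hC (f ≫ m2))
  rw [hg, hX B hB g]; exact zero_comp

lemma hom_to_obj₁_zero (T : Triangle D) (hT : T ∈ distTriang D) {X : D} (f : X ⟶ T.obj₁)
    (hf : f ≫ T.mor₁ = 0) (h : ∀ g : X ⟶ T.obj₃⟦(-1:ℤ)⟧, g = 0) : f = 0 := by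
  obtain ⟨g, hg⟩ := Triangle.coyoneda_exact₂ _ (inv_rot_of_distTriang _ hT) f hf
  rw [hg, h g]; exact zero_comp

/-! ### torsion pair utilities -/

lemma tp_mem_left {U V : Set D} (t : IsTorsionPair D U V) {A : D}
    (hA : ∀ B ∈ V, ∀ f : A ⟶ B, f = 0) : A ∈ U := by
  obtain ⟨B, C, m1, m2, m3, hB, hC, hd⟩ := t.cover A
  obtain ⟨s, hs⟩ := Triangle.coyoneda_exact₂ _ hd (𝟙 A) (by exact (id_comp m2).trans (hA C hC m2))
  exact t.addU.summand B hB A s m1 hs.symm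

lemma tp_mem_right {U V : Set D} (t : IsTorsionPair D U V) {A : D}
    (hA : ∀ B ∈ U, ∀ f : B ⟶ A, f = 0) : A ∈ V := by
  obtain ⟨B, C, m1, m2, m3, hB, hC, hd⟩ := t.cover A
  obtain ⟨r, hr⟩ := Triangle.yoneda_exact₂ _ hd (𝟙 A) (by exact (comp_id m1).trans (hA B hB m1))
  exact t.addV.summand C hC A m2 r hr.symm

/-! ### exactness helpers with clean types -/

section Exact

variable {A B C : D} {m1 : B ⟶ A} {m2 : A ⟶ C} {m3 : C ⟶ B⟦(1:ℤ)⟧}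

lemma coyo₂ (hd : Triangle.mk m1 m2 m3 ∈ distTriang D) {X : D} (f : X ⟶ A)
    (hf : f ≫ m2 = 0) : ∃ g : X ⟶ B, f = g ≫ m1 :=
  Triangle.coyoneda_exact₂ _ hd f hf

lemma coyo₃ (hd : Triangle.mk m1 m2 m3 ∈ distTriang D) {X : D} (f : X ⟶ C)
    (hf : f ≫ m3 = 0) : ∃ g : X ⟶ A, f = g ≫ m2 :=
  Triangle.coyoneda_exact₃ _ hd f hf

lemma coyo₁ (hd : Triangle.mk m1 m2 m3 ∈ distTriang D) {X : D} (f : X ⟶ B⟦(1:ℤ)⟧)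
    (hf : f ≫ m1⟦(1:ℤ)⟧' = 0) : ∃ g : X ⟶ C, f = g ≫ m3 :=
  Triangle.coyoneda_exact₁ _ hd f hf

lemma coyo₂s (hd : Triangle.mk m1 m2 m3 ∈ distTriang D) {X : D} (f : X ⟶ A⟦(1:ℤ)⟧)
    (hf : f ≫ m2⟦(1:ℤ)⟧' = 0) : ∃ g : X ⟶ B⟦(1:ℤ)⟧, f = g ≫ m1⟦(1:ℤ)⟧' := by
  obtain ⟨g, hg⟩ := Triangle.coyoneda_exact₁ _ (rot_of_distTriang _ hd) f hf
  refine ⟨-g, ?_⟩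
  rw [hg]
  exact (Preadditive.comp_neg _ _).trans (Preadditive.neg_comp _ _).symm

lemma yo₂ (hd : Triangle.mk m1 m2 m3 ∈ distTriang D) {X : D} (f : A ⟶ X)
    (hf : m1 ≫ f = 0) : ∃ g : C ⟶ X, f = m2 ≫ g :=
  Triangle.yoneda_exact₂ _ hd f hf

lemma yo₃ (hd : Triangle.mk m1 m2 m3 ∈ distTriang D) {X : D} (f : C ⟶ X)
    (hf : m2 ≫ f = 0) : ∃ g : B⟦(1:ℤ)⟧ ⟶ X, f = m3 ≫ g :=
  Triangle.yoneda_exact₃ _ hd f hf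

lemma cz₁₂ (hd : Triangle.mk m1 m2 m3 ∈ distTriang D) : m1 ≫ m2 = 0 :=
  comp_distTriang_mor_zero₁₂ _ hd

lemma cz₂₃ (hd : Triangle.mk m1 m2 m3 ∈ distTriang D) : m2 ≫ m3 = 0 :=
  comp_distTriang_mor_zero₂₃ _ hd

lemma cz₃₁ (hd : Triangle.mk m1 m2 m3 ∈ distTriang D) : m3 ≫ m1⟦(1:ℤ)⟧' = 0 :=
  comp_distTriang_mor_zero₃₁ _ hd

lemma cdtm₂ {A' B' C' : D} {n1 : B' ⟶ A'} {n2 : A' ⟶ C'} {n3 : C' ⟶ B'⟦(1:ℤ)⟧}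
    (h1 : Triangle.mk m1 m2 m3 ∈ distTriang D) (h2 : Triangle.mk n1 n2 n3 ∈ distTriang D)
    (α : B ⟶ B') (γ : C ⟶ C') (comm : m3 ≫ α⟦(1:ℤ)⟧' = γ ≫ n3) :
    ∃ β : A ⟶ A', m1 ≫ β = α ≫ n1 ∧ m2 ≫ γ = β ≫ n2 :=
  complete_distinguished_triangle_morphism₂ _ _ h1 h2 α γ comm

end Exact

/-! ### Part 1 : φ is well defined and ψ ∘ φ = id -/

section PartOne

variable {U₁ V₁ U₂ V₂ L G : Set D}

lemma tst_shift_one (hT : IsTStructureOn D Set.univ L G) {A : D} (hA : A ∈ L) :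
    A⟦(1:ℤ)⟧ ∈ L := by
  obtain ⟨B, hB, ⟨e⟩⟩ := hT.shiftL hA
  exact hT.isoL ((shiftFunctor D (1:ℤ)).mapIso e ≪≫ nss B).symm hB (Set.mem_univ _)

lemma tst_G'_shift_neg (hT : IsTStructureOn D Set.univ L G) {A : D}
    (hA : A ∈ shiftSet D G (-1)) : A⟦(-1:ℤ)⟧ ∈ shiftSet D G (-1) :=
  ⟨A, hT.shiftG hA, ⟨Iso.refl _⟩⟩

lemma tst_mem_L (hT : IsTStructureOn D Set.univ L G) {A : D}
    (hA : ∀ B ∈ shiftSet D G (-1), ∀ f : A ⟶ B, f = 0) : A ∈ L := by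
  obtain ⟨l, g', m1, m2, m3, hl, hg', hd⟩ := hT.cover A (Set.mem_univ A)
  obtain ⟨r, hr⟩ := Triangle.yoneda_exact₃ _ hd (𝟙 g') (by exact (comp_id m2).trans (hA g' hg' m2))
  have hz : IsZero g' := by
    rw [IsZero.iff_id_eq_zero, hr, hT.hom_zero _ (tst_shift_one hT hl) g' hg' r]; exact comp_zero
  have : IsIso m1 := (Triangle.isZero₃_iff_isIso₁ _ hd).1 hz
  exact hT.isoL (asIso m1) hl (Set.mem_univ A)

lemma tst_mem_G' (hT : IsTStructureOn D Set.univ L G) {A : D}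
    (hA : ∀ B ∈ L, ∀ f : B ⟶ A, f = 0) : A ∈ shiftSet D G (-1) := by
  obtain ⟨l, g', m1, m2, m3, hl, hg', hd⟩ := hT.cover A (Set.mem_univ A)
  obtain ⟨s, hs⟩ := Triangle.coyoneda_exact₂ _ (inv_rot_of_distTriang _ hd) (𝟙 l)
    (by exact (id_comp m1).trans (hA l hl m1))
  have hs0 : s = 0 := hT.hom_zero l hl _ (tst_G'_shift_neg hT hg') s
  have hz : IsZero l := by rw [IsZero.iff_id_eq_zero, hs, hs0]; exact zero_comp
  have : IsIso m2 := (Triangle.isZero₁_iff_isIso₂ _ hd).1 hz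
  obtain ⟨B, hB, ⟨e⟩⟩ := hg'
  exact ⟨B, hB, ⟨(asIso m2) ≪≫ e⟩⟩

lemma part1 (t₁ : IsTorsionPair D U₁ V₁) (t₂ : IsTorsionPair D U₂ V₂)
    (h12 : torsLE D U₁ U₂) (hT : IsTStructureOn D Set.univ L G)
    (hU₁L : U₁ ⊆ L) (hLU₂ : L ⊆ U₂) :
    IsSTorsionPairIn D (U₂ ∩ V₁) (L ∩ V₁) (shiftSet D G (-1) ∩ U₂) ∧
      shiftSet D (L ∩ V₁) 1 ⊆ U₂ ∧ shiftSet D (shiftSet D G (-1) ∩ U₂) (-1) ⊆ V₁ ∧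
      starSet D U₁ (L ∩ V₁) = L ∧
      starSet D (shiftSet D (shiftSet D G (-1) ∩ U₂) 1) (shiftSet D V₂ 1) = G := by
  have hG'V₁ : shiftSet D G (-1) ⊆ V₁ := fun g' hg' =>
    tp_mem_right t₁ (fun u hu f => hT.hom_zero u (hU₁L hu) g' hg' f)
  -- cover of H by (T, F)
  have cover1 : ∀ A ∈ U₂ ∩ V₁, A ∈ starSet D (L ∩ V₁) (shiftSet D G (-1) ∩ U₂) := by
    rintro A ⟨hAU₂, hAV₁⟩
    obtain ⟨l, g', m1, m2, m3, hl, hg', hd⟩ := hT.cover A (Set.mem_univ A)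
    have hlV₁ : l ∈ V₁ := by
      apply tp_mem_right t₁; intro u hu f
      apply hom_to_obj₁_zero _ hd f (t₁.hom_zero u hu A hAV₁ (f ≫ m1))
      intro g
      exact t₁.hom_zero u hu _ (hG'V₁ (tst_G'_shift_neg hT hg')) g
    have hg'U₂ : g' ∈ U₂ := by
      apply tp_mem_left t₂; intro v hv φ
      obtain ⟨ψ, hψ⟩ := Triangle.yoneda_exact₃ _ hd φ (t₂.hom_zero A hAU₂ v hv (m2 ≫ φ))
      rw [hψ, t₂.hom_zero _ (hLU₂ (tst_shift_one hT hl)) v hv ψ]; exact comp_zero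
    exact mem_starSet_of_triangle _ hd ⟨hl, hlV₁⟩ ⟨hg', hg'U₂⟩
  refine ⟨⟨⟨?_, ?_, ?_, ?_, ?_, ?_, ?_, ?_, ?_, ?_, ?_, cover1⟩, ?_⟩, ?_, ?_, ?_, ?_⟩
  · -- subT
    exact fun A hA => ⟨hLU₂ hA.1, hA.2⟩
  · -- subF
    exact fun A hA => ⟨hA.2, hG'V₁ hA.1⟩
  · -- isoT
    exact fun A B e hA hB => ⟨hT.isoL e hA.1 (Set.mem_univ _), hB.2⟩
  · -- isoF
    rintro A B e ⟨⟨C, hC, ⟨e'⟩⟩, _⟩ hB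
    exact ⟨⟨C, hC, ⟨e.symm ≪≫ e'⟩⟩, hB.1⟩
  · -- zeroT
    exact fun Z hZ hH => ⟨tst_mem_L hT (fun B _ f => hZ.eq_of_src f 0), hH.2⟩
  · -- zeroF
    exact fun Z hZ hH => ⟨tst_mem_G' hT (fun B _ f => hZ.eq_of_tgt f 0), hH.1⟩
  · -- sumT
    rintro A ⟨hAL, hAV⟩ B ⟨hBL, hBV⟩
    refine ⟨tst_mem_L hT (fun P hP f => ?_), t₁.addV.sum A hAV B hBV⟩
    apply biprod.hom_ext' <;> rw [comp_zero]
    · rw [hT.hom_zero A hAL P hP (biprod.inl ≫ f)]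
    · rw [hT.hom_zero B hBL P hP (biprod.inr ≫ f)]
  · -- sumF
    rintro A ⟨hAG, hAU⟩ B ⟨hBG, hBU⟩
    refine ⟨tst_mem_G' hT (fun P hP f => ?_), t₂.addU.sum A hAU B hBU⟩
    apply biprod.hom_ext <;> rw [zero_comp]
    · rw [hT.hom_zero P hP A hAG (f ≫ biprod.fst)]
    · rw [hT.hom_zero P hP B hBG (f ≫ biprod.snd)]
  · -- summandT
    rintro A ⟨hAL, _⟩ X i p hip hH
    refine ⟨tst_mem_L hT (fun P hP f => ?_), hH.2⟩
    rw [← id_comp f, ← hip, assoc, hT.hom_zero A hAL P hP (p ≫ f), comp_zero]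
  · -- summandF
    rintro A ⟨hAG, _⟩ X i p hip hH
    refine ⟨tst_mem_G' hT (fun P hP f => ?_), hH.1⟩
    rw [← comp_id f, ← hip, ← assoc, hT.hom_zero P hP A hAG (f ≫ i), zero_comp]
  · -- hom_zero
    exact fun A hA B hB f => hT.hom_zero A hA.1 B hB.1 f
  · -- neg_hom_zero
    exact fun A hA B hB f => hT.hom_zero A hA.1 _ (tst_G'_shift_neg hT hB.1) f
  · -- shiftSet (L ∩ V₁) 1 ⊆ U₂
    rintro A ⟨B, ⟨hBL, _⟩, ⟨e⟩⟩
    exact t₂.addU.iso e.symm (hLU₂ (tst_shift_one hT hBL))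
  · -- shiftSet (F) (-1) ⊆ V₁
    rintro A ⟨B, ⟨hBG, _⟩, ⟨e⟩⟩
    exact t₁.addV.iso e.symm (hG'V₁ (tst_G'_shift_neg hT hBG))
  · -- starSet U₁ (L ∩ V₁) = L
    ext A
    constructor
    · intro hA
      refine tst_mem_L hT (fun P hP f => ?_)
      refine homZero_from_star (fun u hu g => hT.hom_zero u (hU₁L hu) P hP g)
        (fun y hy g => hT.hom_zero y hy.1 P hP g) A hA f
    · intro hAL
      obtain ⟨u, v, m1, m2, m3, hu, hv, hd⟩ := t₁.cover A
      have hvL : v ∈ L := by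
        refine tst_mem_L hT (fun P hP φ => ?_)
        obtain ⟨ψ, hψ⟩ := Triangle.yoneda_exact₃ _ hd φ (hT.hom_zero A hAL P hP (m2 ≫ φ))
        rw [hψ, hT.hom_zero _ (tst_shift_one hT (hU₁L hu)) P hP ψ]; exact comp_zero
      exact mem_starSet_of_triangle _ hd hu ⟨hvL, hv⟩
  · -- starSet (F⟦1⟧) (V₂⟦1⟧) = G
    ext A
    constructor
    · rintro ⟨x, y, m1, m2, m3, ⟨fz, hfz, ⟨ex⟩⟩, ⟨vz, hvz, ⟨ey⟩⟩, hd⟩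
      have key : ∀ l ∈ L, ∀ f : l ⟶ A⟦(-1:ℤ)⟧, f = 0 := by
        intro l hl f
        refine hom_to_shift_neg_zero (fun φ => ?_) f
        have h2 : φ ≫ m2 = 0 := by
          rw [← comp_id (φ ≫ m2), ← ey.hom_inv_id, ← assoc]
          rw [shift_map_zero 1 (fun g => t₂.hom_zero l (hLU₂ hl) vz hvz g)
            ((φ ≫ m2) ≫ ey.hom), zero_comp]
        obtain ⟨ψ, hψ⟩ := Triangle.coyoneda_exact₂ _ hd φ h2
        have h3 : ψ ≫ ex.hom = 0 :=
          shift_map_zero 1 (fun g => hT.hom_zero l hl fz hfz.1 g) (ψ ≫ ex.hom)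
        have hψ0 : ψ ≫ m1 = 0 := by
          have he : ψ = (ψ ≫ ex.hom) ≫ ex.inv := by
            exact ((assoc ψ ex.hom ex.inv).trans ((congrArg (ψ ≫ ·) ex.hom_inv_id).trans (comp_id ψ))).symm
          rw [he, h3, zero_comp]; exact zero_comp
        exact hψ.trans hψ0
      obtain ⟨B, hB, ⟨eB⟩⟩ := tst_mem_G' hT key
      exact hT.isoG ((nss B).symm ≪≫ (shiftFunctor D (1:ℤ)).mapIso eB.symm ≪≫ nss A) hB
        (Set.mem_univ _)
    · intro hA
      have hA' : A⟦(-1:ℤ)⟧ ∈ shiftSet D G (-1) := ⟨A, hA, ⟨Iso.refl _⟩⟩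
      obtain ⟨u₂, v₂, m1, m2, m3, hu₂, hv₂, hd⟩ := t₂.cover (A⟦(-1:ℤ)⟧)
      have hu₂G' : u₂ ∈ shiftSet D G (-1) := by
        refine tst_mem_G' hT (fun l hl f => ?_)
        apply hom_to_obj₁_zero _ hd f (hT.hom_zero l hl _ hA' (f ≫ m1))
        intro g
        exact hom_to_shift_neg_zero
          (fun g' => t₂.hom_zero _ (hLU₂ (tst_shift_one hT hl)) v₂ hv₂ g') g
      have hd3 := rot_of_distTriang _ (rot_of_distTriang _ (rot_of_distTriang _ hd))
      exact mem_starSet_iso _ hd3 (Iso.refl _) (nss A) (Iso.refl _)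
        ⟨u₂, ⟨hu₂G', hu₂⟩, ⟨Iso.refl _⟩⟩ ⟨v₂, hv₂, ⟨Iso.refl _⟩⟩

end PartOne

/-! ### Part 2 : ψ is well defined and φ ∘ ψ = id -/

section PartTwo

variable {U₁ V₁ U₂ V₂ : Set D}

lemma part2 (t₁ : IsTorsionPair D U₁ V₁) (t₂ : IsTorsionPair D U₂ V₂)
    (h12 : torsLE D U₁ U₂) {T F : Set D} (hst : IsSTorsionPairIn D (U₂ ∩ V₁) T F)
    (hT1 : shiftSet D T 1 ⊆ U₂) (hF1 : shiftSet D F (-1) ⊆ V₁) :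
    IsTStructure D (starSet D U₁ T) (starSet D (shiftSet D F 1) (shiftSet D V₂ 1)) ∧
      U₁ ⊆ starSet D U₁ T ∧ starSet D U₁ T ⊆ U₂ ∧
      starSet D U₁ T ∩ V₁ = T ∧
      shiftSet D (starSet D (shiftSet D F 1) (shiftSet D V₂ 1)) (-1) ∩ U₂ = F := by
  set L := starSet D U₁ T with hLdef
  set Gd := starSet D (shiftSet D F 1) (shiftSet D V₂ 1) with hGdef
  set G0 := starSet D F V₂ with hG0def
  have TsubU₂ : T ⊆ U₂ := fun t ht => (hst.subT ht).1
  have TsubV₁ : T ⊆ V₁ := fun t ht => (hst.subT ht).2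
  have FsubU₂ : F ⊆ U₂ := fun f hf => (hst.subF hf).1
  have FsubV₁ : F ⊆ V₁ := fun f hf => (hst.subF hf).2
  have d1 : ∀ {t : D}, t ∈ T → t⟦(1:ℤ)⟧ ∈ U₂ := fun ht => hT1 ⟨_, ht, ⟨Iso.refl _⟩⟩
  have d2 : ∀ {f : D}, f ∈ F → f⟦(-1:ℤ)⟧ ∈ V₁ := fun hf => hF1 ⟨_, hf, ⟨Iso.refl _⟩⟩
  have d3 : ∀ {u : D}, u ∈ U₁ → u⟦(1:ℤ)⟧ ∈ U₂ := fun hu => h12.2 ⟨_, hu, ⟨Iso.refl _⟩⟩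
  have zeroH : ∀ Z : D, IsZero Z → Z ∈ U₂ ∩ V₁ :=
    fun Z hZ => ⟨t₂.addU.zero Z hZ, t₁.addV.zero Z hZ⟩
  -- membership criteria for T and F
  have memT : ∀ {A : D}, A ∈ U₂ → A ∈ V₁ → (∀ f' ∈ F, ∀ φ : A ⟶ f', φ = 0) → A ∈ T := by
    intro A hU hV hhom
    obtain ⟨t, f', m1, m2, m3, ht, hf', hd⟩ := hst.cover A ⟨hU, hV⟩
    obtain ⟨s, hs⟩ := coyo₂ hd (𝟙 A) (by rw [id_comp]; exact hhom f' hf' m2)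
    exact hst.summandT t ht A s m1 hs.symm ⟨hU, hV⟩
  have memF : ∀ {A : D}, A ∈ U₂ → A ∈ V₁ → (∀ t ∈ T, ∀ φ : t ⟶ A, φ = 0) → A ∈ F := by
    intro A hU hV hhom
    obtain ⟨t, f', m1, m2, m3, ht, hf', hd⟩ := hst.cover A ⟨hU, hV⟩
    obtain ⟨r, hr⟩ := yo₂ hd (𝟙 A) (by rw [comp_id]; exact hhom t ht m1)
    exact hst.summandF f' hf' A m2 r hr.symm ⟨hU, hV⟩
  -- membership criterion for L
  have memL : ∀ {A : D}, (∀ f' ∈ F, ∀ φ : A ⟶ f', φ = 0) →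
      (∀ v ∈ V₂, ∀ φ : A ⟶ v, φ = 0) → A ∈ L := by
    intro A hAF hAV
    obtain ⟨u, v, m1, m2, m3, hu, hv, hd⟩ := t₁.cover A
    have hvT : v ∈ T := by
      refine memT ?_ hv ?_
      · apply tp_mem_left t₂; intro v' hv' χ
        obtain ⟨ψ, hψ⟩ := yo₃ hd χ (hAV v' hv' (m2 ≫ χ))
        rw [hψ, t₂.hom_zero _ (d3 hu) v' hv' ψ, comp_zero]
      · intro f' hf' φ
        obtain ⟨ψ, hψ⟩ := yo₃ hd φ (hAF f' hf' (m2 ≫ φ))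
        rw [hψ, hom_from_shift_one_zero (fun g => t₁.hom_zero u hu _ (d2 hf') g) ψ, comp_zero]
    exact mem_starSet_of_triangle _ hd hu hvT
  -- membership criterion for G0
  have memG0 : ∀ {A : D}, (∀ u ∈ U₁, ∀ φ : u ⟶ A, φ = 0) →
      (∀ t ∈ T, ∀ φ : t ⟶ A, φ = 0) → A ∈ G0 := by
    intro A hAU hAT
    obtain ⟨u₂, v₂, a, b, c, hu₂, hv₂, hd⟩ := t₂.cover A
    have hu₂V₁ : u₂ ∈ V₁ := by
      apply tp_mem_right t₁; intro u hu f
      apply hom_to_obj₁_zero _ hd f (hAU u hu (f ≫ a))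
      exact fun g => hom_to_shift_neg_zero (fun g' => t₂.hom_zero _ (d3 hu) v₂ hv₂ g') g
    have hu₂F : u₂ ∈ F := by
      refine memF hu₂ hu₂V₁ ?_
      intro t ht p
      apply hom_to_obj₁_zero _ hd p (hAT t ht (p ≫ a))
      exact fun g => hom_to_shift_neg_zero (fun g' => t₂.hom_zero _ (d1 ht) v₂ hv₂ g') g
    exact mem_starSet_of_triangle _ hd hu₂F hv₂
  -- Hom(U₁ ∪ T, G0) = 0
  have homUG0 : ∀ u ∈ U₁, ∀ B ∈ G0, ∀ f : u ⟶ B, f = 0 := by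
    intro u hu B hB f
    exact homZero_to_star (fun f₂ hf₂ g => t₁.hom_zero u hu f₂ (FsubV₁ hf₂) g)
      (fun v hv g => t₂.hom_zero u (h12.1 hu) v hv g) B hB f
  have homTG0 : ∀ t ∈ T, ∀ B ∈ G0, ∀ f : t ⟶ B, f = 0 := by
    intro t ht B hB f
    exact homZero_to_star (fun f₂ hf₂ g => hst.hom_zero t ht f₂ hf₂ g)
      (fun v hv g => t₂.hom_zero t (TsubU₂ ht) v hv g) B hB f
  -- G0 is stable under ⟦-1⟧
  have G0shift : ∀ {X : D}, X ∈ G0 → X⟦(-1:ℤ)⟧ ∈ G0 := by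
    intro X hX
    apply memG0
    · intro u hu φ
      refine hom_to_shift_neg_zero (fun g => ?_) φ
      exact homZero_to_star
        (fun f₂ hf₂ g' => hom_from_shift_one_zero
          (fun g'' => t₁.hom_zero u hu _ (d2 hf₂) g'') g')
        (fun v hv g' => t₂.hom_zero _ (d3 hu) v hv g') X hX g
    · intro t ht φ
      refine hom_to_shift_neg_zero (fun g => ?_) φ
      exact homZero_to_star
        (fun f₂ hf₂ g' => hom_from_shift_one_zero
          (fun g'' => hst.neg_hom_zero t ht f₂ hf₂ g'') g')
        (fun v hv g' => t₂.hom_zero _ (d1 ht) v hv g') X hX g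
  -- relation between Gd and G0
  have G0toGd : ∀ {X : D}, X ∈ G0 → X⟦(1:ℤ)⟧ ∈ Gd := by
    rintro X ⟨f₂, v₂', m1, m2, m3, hf₂, hv₂', hd⟩
    have hd3 := rot_of_distTriang _ (rot_of_distTriang _ (rot_of_distTriang _ hd))
    exact mem_starSet_iso _ hd3 (Iso.refl _) (Iso.refl _) (Iso.refl _)
      ⟨f₂, hf₂, ⟨Iso.refl _⟩⟩ ⟨v₂', hv₂', ⟨Iso.refl _⟩⟩
  have GdtoG0 : ∀ {X : D}, X ∈ Gd → X⟦(-1:ℤ)⟧ ∈ G0 := by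
    rintro X ⟨x, y, m1, m2, m3, ⟨f₂, hf₂, ⟨ex⟩⟩, ⟨v₂', hv₂', ⟨ey⟩⟩, hd⟩
    have hd3 := inv_rot_of_distTriang _ (inv_rot_of_distTriang _ (inv_rot_of_distTriang _ hd))
    exact mem_starSet_iso _ hd3 ((shiftFunctor D (-1:ℤ)).mapIso ex ≪≫ sns f₂) (Iso.refl _)
      ((shiftFunctor D (-1:ℤ)).mapIso ey ≪≫ sns v₂') hf₂ hv₂'
  have GdEq : shiftSet D Gd (-1) = G0 := by
    ext A; constructor
    · rintro ⟨C, hC, ⟨e⟩⟩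
      exact starSet_isoClosed e.symm (GdtoG0 hC)
    · intro hA
      exact ⟨A⟦(1:ℤ)⟧, G0toGd hA, ⟨(sns A).symm⟩⟩
  -- L ⊆ U₂
  have LsubU₂ : L ⊆ U₂ := fun A hA => tp_mem_left t₂ (fun v hv φ =>
    homZero_from_star (fun u hu g => t₂.hom_zero u (h12.1 hu) v hv g)
      (fun t' ht' g => t₂.hom_zero t' (TsubU₂ ht') v hv g) A hA φ)
  -- the crucial cover
  have cover : ∀ A : D, A ∈ starSet D L G0 := by
    intro A
    obtain ⟨u₂, v₂, a, b, c, hu₂, hv₂, hdA⟩ := t₂.cover A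
    obtain ⟨u₁, h, d, e, f, hu₁, hh, hdu⟩ := t₁.cover u₂
    have hhU₂ : h ∈ U₂ := by
      apply tp_mem_left t₂; intro v' hv' φ
      obtain ⟨ψ, hψ⟩ := yo₃ hdu φ (t₂.hom_zero u₂ hu₂ v' hv' (e ≫ φ))
      rw [hψ, t₂.hom_zero _ (d3 hu₁) v' hv' ψ, comp_zero]
    obtain ⟨t, f₀, p, q, r, ht, hf₀, hdh⟩ := hst.cover h ⟨hhU₂, hh⟩
    obtain ⟨l, j, k, hdl⟩ := distinguished_cocone_triangle₂ (p ≫ f)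
    obtain ⟨ν, hν1, hν2⟩ := cdtm₂ hdl hdu (𝟙 u₁) p (by simp)
    rw [id_comp] at hν1
    -- hν1 : j ≫ ν = d ; hν2 : k ≫ p = ν ≫ e
    obtain ⟨g, ε, δ, hdg⟩ := distinguished_cocone_triangle (ν ≫ a)
    have key : ∀ X : D, (X ∈ U₁ ∨ X ∈ T) → ∀ φ : X ⟶ g, φ = 0 := by
      intro X hX φ
      have hXU₂ : X ∈ U₂ := hX.elim (fun h' => h12.1 h') (fun h' => TsubU₂ h')
      -- (i): every map X ⟶ A factors through ν ≫ a
      have fact : ∀ ψ : X ⟶ A, ∃ ψ' : X ⟶ l, ψ = ψ' ≫ (ν ≫ a) := by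
        intro ψ
        obtain ⟨ψ₂, hψ₂⟩ := coyo₂ hdA ψ (t₂.hom_zero X hXU₂ v₂ hv₂ (ψ ≫ b))
        rcases hX with hXU | hXT
        · obtain ⟨ψ₃, hψ₃⟩ := coyo₂ hdu ψ₂ (t₁.hom_zero X hXU h hh (ψ₂ ≫ e))
          refine ⟨ψ₃ ≫ j, ?_⟩
          rw [hψ₂, hψ₃, ← hν1]
          simp only [assoc]
        · obtain ⟨θ, hθ⟩ := coyo₂ hdh (ψ₂ ≫ e)
            (by
              have h0 := hst.hom_zero X hXT f₀ hf₀ ((ψ₂ ≫ e) ≫ q)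
              rw [assoc] at h0 ⊢
              exact h0)
          obtain ⟨χ, hχ⟩ := coyo₃ hdl θ
            (by
              have hef : e ≫ f = 0 := cz₂₃ hdu
              rw [← assoc, ← hθ, assoc, hef, comp_zero])
          obtain ⟨ξ, hξ⟩ := coyo₂ hdu (ψ₂ - χ ≫ ν)
            (by rw [Preadditive.sub_comp, assoc, ← hν2, ← assoc, ← hχ, hθ, sub_self])
          refine ⟨χ + ξ ≫ j, ?_⟩
          rw [hψ₂]
          have hψ₂' : ψ₂ = (χ + ξ ≫ j) ≫ ν := by
            rw [Preadditive.add_comp, assoc, hν1]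
            rw [sub_eq_iff_eq_add] at hξ
            rw [hξ, add_comm]
          rw [hψ₂', assoc]
      -- (ii): injectivity
      have inj : ∀ ρ : X ⟶ l⟦(1:ℤ)⟧, ρ ≫ (ν ≫ a)⟦(1:ℤ)⟧' = 0 → ρ = 0 := by
        intro ρ hρ
        have hτ : ρ ≫ ν⟦(1:ℤ)⟧' = 0 := by
          obtain ⟨x, hx⟩ := coyo₁ hdA (ρ ≫ ν⟦(1:ℤ)⟧')
            (by rw [assoc, ← (shiftFunctor D (1:ℤ)).map_comp]; exact hρ)
          rw [hx, t₂.hom_zero X hXU₂ v₂ hv₂ x, zero_comp]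
        have hρk : ρ ≫ k⟦(1:ℤ)⟧' = 0 := by
          obtain ⟨y, hy⟩ := coyo₁ hdh (ρ ≫ k⟦(1:ℤ)⟧')
            (by
              rw [assoc, ← (shiftFunctor D (1:ℤ)).map_comp, hν2,
                (shiftFunctor D (1:ℤ)).map_comp, ← assoc, hτ, zero_comp])
          have hy0 : y = 0 := hX.elim
            (fun hXU => t₁.hom_zero X hXU f₀ (FsubV₁ hf₀) y)
            (fun hXT => hst.hom_zero X hXT f₀ hf₀ y)
          rw [hy, hy0, zero_comp]
        obtain ⟨ζ, hζ⟩ := coyo₂s hdl ρ hρk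
        -- hζ : ρ = ζ ≫ j⟦1⟧'
        have hζd : ζ ≫ d⟦(1:ℤ)⟧' = 0 := by
          rw [← hν1, (shiftFunctor D (1:ℤ)).map_comp, ← assoc, ← hζ, hτ]
        obtain ⟨ω, hω⟩ := coyo₁ hdu ζ hζd
        rcases hX with hXU | hXT
        · rw [hζ, hω, t₁.hom_zero X hXU h hh ω, zero_comp, zero_comp]
        · obtain ⟨θ', hθ'⟩ := coyo₂ hdh ω (hst.hom_zero X hXT f₀ hf₀ (ω ≫ q))
          have h31 : (p ≫ f) ≫ j⟦(1:ℤ)⟧' = 0 := cz₃₁ hdl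
          rw [assoc] at h31
          rw [hζ, hω, hθ', assoc, assoc, h31, comp_zero]
      have hρ0 : φ ≫ δ = 0 := inj (φ ≫ δ)
        (by rw [assoc, cz₃₁ hdg, comp_zero])
      obtain ⟨ψ, hψ⟩ := coyo₃ hdg φ hρ0
      obtain ⟨ψ', hψ'⟩ := fact ψ
      rw [hψ, hψ', assoc, cz₁₂ hdg, comp_zero]
    have hlL : l ∈ L := mem_starSet_of_triangle _ hdl hu₁ ht
    have hgG0 : g ∈ G0 := memG0 (fun u hu φ => key u (Or.inl hu) φ)
      (fun t' ht' φ => key t' (Or.inr ht') φ)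
    exact mem_starSet_of_triangle _ hdg hlL hgG0
  -- L is stable under ⟦1⟧
  have shiftL1 : ∀ {A : D}, A ∈ L → A⟦(1:ℤ)⟧ ∈ L := by
    rintro A ⟨x, y, m1, m2, m3, hx, hy, hd⟩
    have hd3 := rot_of_distTriang _ (rot_of_distTriang _ (rot_of_distTriang _ hd))
    apply memL
    · intro f' hf' φ
      obtain ⟨ψ, hψ⟩ := yo₂ hd3 φ
        (hom_from_shift_one_zero (fun g => t₁.hom_zero x hx _ (d2 hf') g) _)
      rw [hψ, hom_from_shift_one_zero (fun g => hst.neg_hom_zero y hy f' hf' g) ψ]; exact comp_zero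
    · intro v hv φ
      obtain ⟨ψ, hψ⟩ := yo₂ hd3 φ (t₂.hom_zero _ (d3 hx) v hv _)
      rw [hψ, t₂.hom_zero _ (d1 hy) v hv ψ]; exact comp_zero
  -- assemble the t-structure
  have tst : IsTStructureOn D Set.univ L Gd := by
    refine ⟨Set.subset_univ _, Set.subset_univ _, ?_, ?_, ?_, ?_, ?_, ?_⟩
    · exact fun A B e hA _ => starSet_isoClosed e hA
    · exact fun A B e hA _ => starSet_isoClosed e hA
    · show homZero D L (shiftSet D Gd (-1))
      rw [GdEq]
      intro A hA B hB φ
      exact homZero_from_star (fun u hu g => homUG0 u hu B hB g)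
        (fun t' ht' g => homTG0 t' ht' B hB g) A hA φ
    · intro A _
      show A ∈ starSet D L (shiftSet D Gd (-1))
      rw [GdEq]
      exact cover A
    · intro A hA
      exact ⟨A⟦(1:ℤ)⟧, shiftL1 hA, ⟨(sns A).symm⟩⟩
    · intro A hA
      rw [GdEq] at hA
      exact starSet_isoClosed (nss A) (G0toGd (G0shift hA))
  refine ⟨tst, ?_, LsubU₂, ?_, ?_⟩
  · exact fun u hu => mem_starSet_left (fun Z hZ => hst.zeroT Z hZ (zeroH Z hZ)) hu
  · -- L ∩ V₁ = T
    ext A; constructor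
    · rintro ⟨hAL, hAV⟩
      refine memT (LsubU₂ hAL) hAV (fun f' hf' φ => ?_)
      exact homZero_from_star (fun u hu g => t₁.hom_zero u hu f' (FsubV₁ hf') g)
        (fun t' ht' g => hst.hom_zero t' ht' f' hf' g) A hAL φ
    · intro ht
      exact ⟨mem_starSet_right t₁.addU.zero ht, TsubV₁ ht⟩
  · -- Gd⟦-1⟧ ∩ U₂ = F
    rw [GdEq]
    ext A; constructor
    · rintro ⟨hAG0, hAU₂⟩
      obtain ⟨f₂, v₂', m1, m2, m3, hf₂, hv₂', hd⟩ := hAG0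
      obtain ⟨s, hs⟩ := coyo₂ hd (𝟙 A)
        (by rw [id_comp]; exact t₂.hom_zero A hAU₂ v₂' hv₂' m2)
      have hAV₁ : A ∈ V₁ := by
        apply tp_mem_right t₁; intro u hu φ
        have h0 : φ ≫ s = 0 := t₁.hom_zero u hu f₂ (FsubV₁ hf₂) (φ ≫ s)
        rw [← comp_id φ, hs, ← assoc, h0, zero_comp]
      exact hst.summandF f₂ hf₂ A s m1 hs.symm ⟨hAU₂, hAV₁⟩
    · intro hf
      exact ⟨mem_starSet_left t₂.addV.zero hf, FsubU₂ hf⟩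

end PartTwo

end Stmt4Proof

/-- Corollary 3.10 (2): `φ(D^{≤0}, D^{≥0}) = (D^{≤0} ∩ 𝒱₁, D^{≥1} ∩ 𝒰₂)`
and `ψ(𝒯,ℱ) = (𝒰₁ * 𝒯, ℱ[1] * 𝒱₂[1])` are mutually inverse, order preserving bijections
between `t`-structures on `D` with `𝒰₁ ⊆ D^{≤0} ⊆ 𝒰₂` and `s`-torsion pairs `(𝒯,ℱ)` in
`ℋ = 𝒰₂ ∩ 𝒱₁` with `𝒯[1] ⊆ 𝒰₂` and `ℱ[-1] ⊆ 𝒱₁`. -/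
theorem stmt4 (U₁ V₁ U₂ V₂ : Set D)
    (t₁ : IsTorsionPair D U₁ V₁) (t₂ : IsTorsionPair D U₂ V₂)
    (h12 : torsLE D U₁ U₂) :
    -- φ is well defined and ψ ∘ φ = id
    (∀ L G, IsTStructure D L G → U₁ ⊆ L → L ⊆ U₂ →
       IsSTorsionPairIn D (U₂ ∩ V₁) (L ∩ V₁) (shiftSet D G (-1) ∩ U₂) ∧
       shiftSet D (L ∩ V₁) 1 ⊆ U₂ ∧ shiftSet D (shiftSet D G (-1) ∩ U₂) (-1) ⊆ V₁ ∧
       starSet D U₁ (L ∩ V₁) = L ∧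
       starSet D (shiftSet D (shiftSet D G (-1) ∩ U₂) 1) (shiftSet D V₂ 1) = G) ∧
    -- ψ is well defined and φ ∘ ψ = id
    (∀ T F, IsSTorsionPairIn D (U₂ ∩ V₁) T F →
       shiftSet D T 1 ⊆ U₂ → shiftSet D F (-1) ⊆ V₁ →
       IsTStructure D (starSet D U₁ T) (starSet D (shiftSet D F 1) (shiftSet D V₂ 1)) ∧
       U₁ ⊆ starSet D U₁ T ∧ starSet D U₁ T ⊆ U₂ ∧
       starSet D U₁ T ∩ V₁ = T ∧
       shiftSet D (starSet D (shiftSet D F 1) (shiftSet D V₂ 1)) (-1) ∩ U₂ = F) ∧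
    -- φ preserves the orders (inclusion of aisles to inclusion of torsion classes)
    (∀ L G L' G', IsTStructure D L G → IsTStructure D L' G' →
       U₁ ⊆ L → L ⊆ U₂ → U₁ ⊆ L' → L' ⊆ U₂ → L ⊆ L' → L ∩ V₁ ⊆ L' ∩ V₁) ∧
    -- ψ preserves the orders
    (∀ T F T' F', IsSTorsionPairIn D (U₂ ∩ V₁) T F → IsSTorsionPairIn D (U₂ ∩ V₁) T' F' →
       shiftSet D T 1 ⊆ U₂ → shiftSet D F (-1) ⊆ V₁ →
       shiftSet D T' 1 ⊆ U₂ → shiftSet D F' (-1) ⊆ V₁ →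
       T ⊆ T' → starSet D U₁ T ⊆ starSet D U₁ T') := by
  refine ⟨?_, ?_, ?_, ?_⟩
  · intro L G hT hU₁L hLU₂
    exact Stmt4Proof.part1 t₁ t₂ h12 hT hU₁L hLU₂
  · intro T F hst hT1 hF1
    exact Stmt4Proof.part2 t₁ t₂ h12 hst hT1 hF1
  · intro L G L' G' _ _ _ _ _ _ hLL'
    exact fun A hA => ⟨hLL' hA.1, hA.2⟩
  · intro T F T' F' _ _ _ _ _ _ hTT'
    exact Stmt4Proof.starSet_mono (Set.Subset.refl U₁) hTT'
end

section
/- Let D be a triangulated category with two t-structures s1 = (C1^{≤0}, C1^{≥0}) and s2 = (C2^{≤0}, C2^{≥0}) such that C1^{≤0} ⊆ C2^{≤0}, and set ℋ = C2^{≤0} ∩ C1^{≥1}. Then the assignments φ(𝒰,𝒱) = (𝒰 ∩ C1^{≥1}, 𝒱 ∩ C2^{≤0}) and ψ(𝒯,ℱ) = (C1^{≤0} * 𝒯, ℱ * C2^{≥1}) are mutually inverse, order preserving bijections between the poset of torsion pairs (𝒰,𝒱) in D with C1^{≤0} ⊆ 𝒰 ⊆ C2^{≤0} and the poset of torsion pairs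 in ℋ. -/
open CategoryTheory Category Limits Pretriangulated

universe v u

variable (D : Type u) [Category.{v} D] [Preadditive D] [HasZeroObject D]
  [HasShift D ℤ] [∀ n : ℤ, (shiftFunctor D n).Additive]
  [Pretriangulated D] [HasBinaryBiproducts D]

set_option linter.unusedSectionVars false
set_option linter.unusedVariables false

open ZeroObject

section AuxiliaryLemmas


variable {D}

/-- right orthogonal class -/
def rOrth (S : Set D) : Set D := {A : D | ∀ M ∈ S, ∀ φ : A ⟶ M, φ = 0}

/-- left orthogonal class -/
def lOrth (S : Set D) : Set D := {B : D | ∀ P ∈ S, ∀ φ : P ⟶ B, φ = 0}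

lemma shift_map_eq_zero {X Y : D} (f : X ⟶ Y) (h : f⟦(1:ℤ)⟧' = 0) : f = 0 := by
  apply (shiftFunctor D (1:ℤ)).map_injective
  rw [h, Functor.map_zero]

lemma vanish₁ (T : Triangle D) (hT : T ∈ distTriang D) {X : D} (f : X ⟶ T.obj₁)
    (h1 : f ≫ T.mor₁ = 0) (h2 : ∀ g : X⟦(1:ℤ)⟧ ⟶ T.obj₃, g = 0) : f = 0 := by
  obtain ⟨g, hg⟩ := T.coyoneda_exact₁ hT (f⟦(1:ℤ)⟧')
    (by rw [← Functor.map_comp, h1, Functor.map_zero])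
  rw [h2 g, zero_comp] at hg
  exact shift_map_eq_zero f hg

lemma isZero₁' (T : Triangle D) (hT : T ∈ distTriang D) (h1 : T.mor₁ = 0)
    (h2 : ∀ g : T.obj₁⟦(1:ℤ)⟧ ⟶ T.obj₃, g = 0) : IsZero T.obj₁ := by
  rw [IsZero.iff_id_eq_zero]
  exact vanish₁ T hT (𝟙 _) (by rw [id_comp, h1]) h2

lemma isZero₃' (T : Triangle D) (hT : T ∈ distTriang D) (h1 : T.mor₂ = 0)
    (h2 : ∀ g : T.obj₁⟦(1:ℤ)⟧ ⟶ T.obj₃, g = 0) : IsZero T.obj₃ := by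
  rw [IsZero.iff_id_eq_zero]
  obtain ⟨g, hg⟩ := T.yoneda_exact₃ hT (𝟙 T.obj₃) (by rw [comp_id, h1])
  rw [hg, h2 g, comp_zero]

lemma shiftSet_iso {S : Set D} {n : ℤ} {A B : D} (e : A ≅ B) (hA : A ∈ shiftSet D S n) :
    B ∈ shiftSet D S n := by
  obtain ⟨C, hC, ⟨e'⟩⟩ := hA
  exact ⟨C, hC, ⟨e.symm ≪≫ e'⟩⟩

lemma rOrth_additive (S : Set D) : AdditiveClosed D (rOrth S) where
  iso := by
    intro A B e hA M hM φ
    have h1 : e.hom ≫ φ = 0 := hA M hM _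
    calc φ = e.inv ≫ (e.hom ≫ φ) := by rw [Iso.inv_hom_id_assoc]
    _ = 0 := by rw [h1, comp_zero]
  zero := fun Z hZ M hM φ => hZ.eq_of_src φ 0
  sum := by
    intro A hA B hB M hM φ
    refine biprod.hom_ext' φ 0 ?_ ?_
    · rw [comp_zero]; exact hA M hM _
    · rw [comp_zero]; exact hB M hM _
  summand := by
    intro A hA X i p hip M hM φ
    rw [← id_comp φ, ← hip, assoc, hA M hM (p ≫ φ), comp_zero]

lemma lOrth_additive (S : Set D) : AdditiveClosed D (lOrth S) where
  iso := by
    intro A B e hA P hP φ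
    have h1 : φ ≫ e.inv = 0 := hA P hP _
    calc φ = (φ ≫ e.inv) ≫ e.hom := by rw [assoc, Iso.inv_hom_id, comp_id]
    _ = 0 := by rw [h1, zero_comp]
  zero := fun Z hZ P hP φ => hZ.eq_of_tgt φ 0
  sum := by
    intro A hA B hB P hP φ
    refine biprod.hom_ext φ 0 ?_ ?_
    · rw [zero_comp]; exact hA P hP _
    · rw [zero_comp]; exact hB P hP _
  summand := by
    intro A hA X i p hip P hP φ
    rw [← comp_id φ, ← hip, ← assoc, hA P hP (φ ≫ i), zero_comp]

section TS

variable {L G : Set D} (s : IsTStructure D L G)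
include s

lemma ts_shift {A : D} (hA : A ∈ L) : A⟦(1:ℤ)⟧ ∈ L := by
  obtain ⟨B, hB, ⟨e⟩⟩ := s.shiftL hA
  exact s.isoL ((shiftFunctor D (1:ℤ)).mapIso e ≪≫
    (shiftFunctorCompIsoId D (-1 : ℤ) (1 : ℤ) (by omega)).app B).symm hB trivial

lemma ts_charL {A : D} (hA : ∀ r ∈ shiftSet D G (-1), ∀ f : A ⟶ r, f = 0) : A ∈ L := by
  obtain ⟨ℓ, r, α, β, γ, hℓ, hr, hd⟩ := s.cover A trivial
  have h0 : IsZero r := isZero₃' _ hd (hA r hr β) (fun g => s.hom_zero _ (ts_shift s hℓ) r hr g)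
  haveI : IsIso α := ((Triangle.mk α β γ).isZero₃_iff_isIso₁ hd).1 h0
  exact s.isoL (asIso α) hℓ trivial

lemma ts_charR {B : D} (hB : ∀ ℓ ∈ L, ∀ f : ℓ ⟶ B, f = 0) : B ∈ shiftSet D G (-1) := by
  obtain ⟨ℓ, r, α, β, γ, hℓ, hr, hd⟩ := s.cover B trivial
  have h0 : IsZero ℓ := isZero₁' _ hd (hB ℓ hℓ α) (fun g => s.hom_zero _ (ts_shift s hℓ) r hr g)
  haveI : IsIso β := ((Triangle.mk α β γ).isZero₁_iff_isIso₂ hd).1 h0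
  exact shiftSet_iso (asIso β).symm hr

lemma ts_extL (T : Triangle D) (hT : T ∈ distTriang D)
    (h1 : T.obj₁ ∈ L) (h3 : T.obj₃ ∈ L) : T.obj₂ ∈ L :=
  ts_charL s (fun r hr φ => by
    obtain ⟨g, hg⟩ := T.yoneda_exact₂ hT φ (s.hom_zero _ h1 r hr _)
    rw [hg, s.hom_zero _ h3 r hr g, comp_zero])

lemma ts_zeroL {Z : D} (hZ : IsZero Z) : Z ∈ L :=
  ts_charL s (fun r _ φ => hZ.eq_of_src φ 0)

lemma ts_zeroR {Z : D} (hZ : IsZero Z) : Z ∈ shiftSet D G (-1) :=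
  ts_charR s (fun ℓ _ φ => hZ.eq_of_tgt φ 0)

lemma ts_sumL {A B : D} (hA : A ∈ L) (hB : B ∈ L) : (A ⊞ B) ∈ L :=
  ts_charL s (fun r hr φ => biprod.hom_ext' φ 0
    (by rw [comp_zero]; exact s.hom_zero A hA r hr _)
    (by rw [comp_zero]; exact s.hom_zero B hB r hr _))

lemma ts_sumR {A B : D} (hA : A ∈ shiftSet D G (-1)) (hB : B ∈ shiftSet D G (-1)) :
    (A ⊞ B) ∈ shiftSet D G (-1) :=
  ts_charR s (fun ℓ hℓ φ => biprod.hom_ext φ 0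
    (by rw [zero_comp]; exact s.hom_zero ℓ hℓ A hA _)
    (by rw [zero_comp]; exact s.hom_zero ℓ hℓ B hB _))

end TS

section TPIn

variable {H T F : Set D} (tp : IsTorsionPairIn D H T F)
include tp

lemma tpin_charT {X : D} (hX : X ∈ H) (h0 : ∀ f ∈ F, ∀ φ : X ⟶ f, φ = 0) : X ∈ T := by
  obtain ⟨t, f, α, β, γ, ht, hf, hd⟩ := tp.cover X hX
  obtain ⟨g, hg⟩ := (Triangle.mk α β γ).coyoneda_exact₂ hd (𝟙 X) (by
    show 𝟙 X ≫ β = 0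
    rw [id_comp]; exact h0 f hf β)
  exact tp.summandT t ht X g α hg.symm hX

lemma tpin_charF {X : D} (hX : X ∈ H) (h0 : ∀ t ∈ T, ∀ φ : t ⟶ X, φ = 0) : X ∈ F := by
  obtain ⟨t, f, α, β, γ, ht, hf, hd⟩ := tp.cover X hX
  obtain ⟨g, hg⟩ := (Triangle.mk α β γ).yoneda_exact₂ hd (𝟙 X) (by
    show α ≫ 𝟙 X = 0
    rw [comp_id]; exact h0 t ht α)
  exact tp.summandF f hf X β g hg.symm hX

end TPIn

section Main

variable {L₁ G₁ L₂ G₂ : Set D}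
variable (s₁ : IsTStructure D L₁ G₁) (s₂ : IsTStructure D L₂ G₂) (h : L₁ ⊆ L₂)

section Part2

variable {T F : Set D}
variable (htf : IsTorsionPairIn D (L₂ ∩ shiftSet D G₁ (-1)) T F)

include s₁ s₂ h htf

lemma homPM {P M : D} (hP : P ∈ L₁ ∪ T) (hM : M ∈ F ∪ shiftSet D G₂ (-1)) (φ : P ⟶ M) :
    φ = 0 := by
  rcases hM with hM | hM
  · rcases hP with hP | hP
    · exact s₁.hom_zero P hP M (htf.subF hM).2 φ
    · exact htf.hom_zero P hP M hM φ
  · rcases hP with hP | hP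
    · exact s₂.hom_zero P (h hP) M hM φ
    · exact s₂.hom_zero P (htf.subT hP).1 M hM φ

lemma starLT_sub : starSet D L₁ T ⊆ rOrth (F ∪ shiftSet D G₂ (-1)) := by
  rintro A ⟨ℓ, t', α, β, γ, hℓ, ht', hd⟩ M hM φ
  obtain ⟨g, hg⟩ := (Triangle.mk α β γ).yoneda_exact₂ hd φ
    (homPM s₁ s₂ h htf (Or.inl hℓ) hM (α ≫ φ))
  erw [hg, homPM s₁ s₂ h htf (Or.inr ht') hM g, comp_zero]; rfl

lemma sub_starLT : rOrth (F ∪ shiftSet D G₂ (-1)) ⊆ starSet D L₁ T := by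
  intro A hA
  have hAL₂ : A ∈ L₂ := ts_charL s₂ (fun r hr φ => hA r (Or.inr hr) φ)
  obtain ⟨a₁, c, u, v, δ, ha₁, hcR, hT1⟩ := s₁.cover A trivial
  have hcL₂ : c ∈ L₂ :=
    ts_extL s₂ (Triangle.mk u v δ).rotate (rot_of_distTriang _ hT1) hAL₂ (ts_shift s₂ (h ha₁))
  have hcT : c ∈ T := by
    refine tpin_charT htf ⟨hcL₂, hcR⟩ (fun f' hf' φ => ?_)
    obtain ⟨ψ, hψ⟩ := (Triangle.mk u v δ).yoneda_exact₃ hT1 φ (hA f' (Or.inl hf') (v ≫ φ))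
    erw [hψ, s₁.hom_zero _ (ts_shift s₁ ha₁) f' (htf.subF hf').2 ψ, comp_zero]; rfl
  exact ⟨a₁, c, u, v, δ, ha₁, hcT, hT1⟩

lemma starFR_sub : starSet D F (shiftSet D G₂ (-1)) ⊆ lOrth (L₁ ∪ T) := by
  rintro B ⟨f₀, r, α, β, γ, hf₀, hr, hd⟩ P hP φ
  have h1 : φ ≫ β = 0 := by
    rcases hP with hP | hP
    · exact s₂.hom_zero P (h hP) r hr _
    · exact s₂.hom_zero P (htf.subT hP).1 r hr _
  obtain ⟨g, hg⟩ := (Triangle.mk α β γ).coyoneda_exact₂ hd φ h1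
  erw [hg, homPM s₁ s₂ h htf hP (Or.inl hf₀) g, zero_comp]; rfl

lemma sub_starFR : lOrth (L₁ ∪ T) ⊆ starSet D F (shiftSet D G₂ (-1)) := by
  intro B hB
  obtain ⟨b', b, ι, π, γ, hb'L, hb, hT2⟩ := s₂.cover B trivial
  have hb'R₁ : b' ∈ shiftSet D G₁ (-1) := ts_charR s₁ (fun ℓ hℓ φ =>
    vanish₁ _ hT2 φ (hB ℓ (Or.inl hℓ) (φ ≫ ι))
      (fun g => s₂.hom_zero _ (ts_shift s₂ (h hℓ)) b hb g))
  have hb'F : b' ∈ F := tpin_charF htf ⟨hb'L, hb'R₁⟩ (fun t' ht' ψ =>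
    vanish₁ _ hT2 ψ (hB t' (Or.inr ht') (ψ ≫ ι))
      (fun g => s₂.hom_zero _ (ts_shift s₂ (htf.subT ht').1) b hb g))
  exact ⟨b', b, ι, π, γ, hb'F, hb, hT2⟩

lemma cover2 (A : D) :
    A ∈ starSet D (starSet D L₁ T) (starSet D F (shiftSet D G₂ (-1))) := by
  obtain ⟨a₁, c, u, v, δ, ha₁, hcR, hT1⟩ := s₁.cover A trivial
  obtain ⟨c', b, ι, π, γ, hc'L, hb, hT2⟩ := s₂.cover c trivial
  have hc'R : c' ∈ shiftSet D G₁ (-1) := ts_charR s₁ (fun ℓ hℓ φ =>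
    vanish₁ _ hT2 φ (s₁.hom_zero ℓ hℓ c hcR (φ ≫ ι))
      (fun g => s₂.hom_zero _ (ts_shift s₂ (h hℓ)) b hb g))
  obtain ⟨t, f, j, q, ε, ht, hf, hT3⟩ := htf.cover c' ⟨hc'L, hc'R⟩
  obtain ⟨yt, n, e, hT4⟩ := distinguished_cocone_triangle (j ≫ ι)
  obtain ⟨x, m, hh, hT5⟩ := distinguished_cocone_triangle₁ (v ≫ n)
  -- claim 1 : Hom(L₁ ∪ T, yt) = 0
  have hy : ∀ P, P ∈ L₁ ∪ T → ∀ φ : P ⟶ yt, φ = 0 := by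
    intro P hP φ
    have hPb : ∀ ψ : P ⟶ b, ψ = 0 := fun ψ =>
      homPM s₁ s₂ h htf hP (Or.inr hb) ψ
    have hPf : ∀ ψ : P ⟶ f, ψ = 0 := fun ψ =>
      homPM s₁ s₂ h htf hP (Or.inl hf) ψ
    have hξι : (φ ≫ e) ≫ (j ≫ ι)⟦(1:ℤ)⟧' = 0 := by
      rw [assoc, show e ≫ (j ≫ ι)⟦(1:ℤ)⟧' = 0 from comp_distTriang_mor_zero₃₁ _ hT4, comp_zero]
    have hξj : (φ ≫ e) ≫ j⟦(1:ℤ)⟧' = 0 := by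
      obtain ⟨ζ, hζ⟩ := (Triangle.mk ι π γ).coyoneda_exact₁ hT2 ((φ ≫ e) ≫ j⟦(1:ℤ)⟧') (by
        erw [assoc, ← Functor.map_comp]; exact hξι)
      erw [hζ, hPb ζ, zero_comp]; rfl
    have hξ : φ ≫ e = 0 := by
      obtain ⟨ζ', hζ'⟩ := (Triangle.mk j q ε).coyoneda_exact₁ hT3 (φ ≫ e) hξj
      erw [hζ', hPf ζ', zero_comp]; rfl
    obtain ⟨χ, hχ⟩ := (Triangle.mk (j ≫ ι) n e).coyoneda_exact₃ hT4 φ hξ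
    rcases hP with hP | hP
    · erw [hχ, s₁.hom_zero P hP c hcR χ, zero_comp]; rfl
    · obtain ⟨χ', hχ'⟩ := (Triangle.mk ι π γ).coyoneda_exact₂ hT2 χ
        (s₂.hom_zero P (htf.subT hP).1 b hb (χ ≫ π))
      obtain ⟨χ'', hχ''⟩ := (Triangle.mk j q ε).coyoneda_exact₂ hT3 χ'
        (htf.hom_zero P hP f hf (χ' ≫ q))
      have hz : (j ≫ ι) ≫ n = 0 := comp_distTriang_mor_zero₁₂ _ hT4
      rw [hχ, hχ', hχ'']
      simp only [Triangle.mk_mor₁, Triangle.mk_mor₂, assoc]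
      erw [assoc, assoc, ← assoc j ι n, hz, comp_zero]; rfl
  -- claim 2 : Hom(x, F ∪ R₂) = 0
  have hx : ∀ M, M ∈ F ∪ shiftSet D G₂ (-1) → ∀ φ : x ⟶ M, φ = 0 := by
    intro M hM φ
    have hPM' : ∀ ψ : a₁ ⟶ M, ψ = 0 := fun ψ => homPM s₁ s₂ h htf (Or.inl ha₁) hM ψ
    have hTM' : ∀ ψ : t ⟶ M, ψ = 0 := fun ψ => homPM s₁ s₂ h htf (Or.inr ht) hM ψ
    have stepA : ∀ Φ : A ⟶ M, m ≫ Φ = 0 := by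
      intro Φ
      obtain ⟨Φ', hΦ'⟩ := (Triangle.mk u v δ).yoneda_exact₂ hT1 Φ (hPM' (u ≫ Φ))
      obtain ⟨Φ'', hΦ''⟩ := (Triangle.mk (j ≫ ι) n e).yoneda_exact₂ hT4 Φ' (hTM' ((j ≫ ι) ≫ Φ'))
      have hz : m ≫ (v ≫ n) = 0 := comp_distTriang_mor_zero₁₂ _ hT5
      have heq : m ≫ Φ = (m ≫ (v ≫ n)) ≫ Φ'' := by
        rw [hΦ', hΦ'']
        simp only [Triangle.mk_mor₂, assoc]
        erw [assoc, assoc]; rfl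
      erw [heq, hz, zero_comp]
    have stepC : hh ≫ φ⟦(1:ℤ)⟧' = 0 := by
      have hn : n ≫ (hh ≫ φ⟦(1:ℤ)⟧') = 0 := by
        obtain ⟨ζ₂, hζ₂⟩ := (Triangle.mk u v δ).yoneda_exact₃ hT1 (n ≫ (hh ≫ φ⟦(1:ℤ)⟧')) (by
          show v ≫ n ≫ hh ≫ φ⟦(1:ℤ)⟧' = 0
          simp only [← assoc]
          rw [show (v ≫ n) ≫ hh = 0 from comp_distTriang_mor_zero₂₃ _ hT5, zero_comp])
        obtain ⟨ζ₃, hζ₃⟩ := (shiftFunctor D (1:ℤ)).map_surjective ζ₂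
        erw [hζ₂, ← hζ₃, hPM' ζ₃, Functor.map_zero, comp_zero]; rfl
      obtain ⟨ζ₄, hζ₄⟩ := (Triangle.mk (j ≫ ι) n e).yoneda_exact₃ hT4 (hh ≫ φ⟦(1:ℤ)⟧') hn
      obtain ⟨ζ₅, hζ₅⟩ := (shiftFunctor D (1:ℤ)).map_surjective ζ₄
      erw [hζ₄, ← hζ₅, hTM' ζ₅, Functor.map_zero, comp_zero]; rfl
    obtain ⟨Ψ, hΨ⟩ := ((Triangle.mk m (v ≫ n) hh).rotate.rotate).yoneda_exact₂
      (rot_of_distTriang _ (rot_of_distTriang _ hT5)) (φ⟦(1:ℤ)⟧') (by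
        show hh ≫ φ⟦(1:ℤ)⟧' = 0
        exact stepC)
    obtain ⟨Φ, hΦ⟩ := (shiftFunctor D (1:ℤ)).map_surjective Ψ
    apply shift_map_eq_zero
    erw [hΨ]
    show (-(m⟦(1:ℤ)⟧')) ≫ Ψ = 0
    erw [← hΦ, Preadditive.neg_comp, ← Functor.map_comp, stepA Φ, Functor.map_zero, neg_zero]
  exact ⟨x, yt, m, v ≫ n, hh,
    sub_starLT s₁ s₂ h htf hx, sub_starFR s₁ s₂ h htf hy, hT5⟩

lemma p2_interT : starSet D L₁ T ∩ shiftSet D G₁ (-1) = T := by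
  apply subset_antisymm
  · rintro A ⟨hA, hAR⟩
    obtain ⟨ℓ, t', α, β, γ, hℓ, ht', hd⟩ := hA
    have h0 : IsZero ℓ := isZero₁' _ hd (s₁.hom_zero ℓ hℓ A hAR α)
      (fun g => s₁.hom_zero _ (ts_shift s₁ hℓ) t' (htf.subT ht').2 g)
    haveI : IsIso β := ((Triangle.mk α β γ).isZero₁_iff_isIso₂ hd).1 h0
    have hAL₂ : A ∈ L₂ := ts_charL s₂ (fun r hr φ =>
      starLT_sub s₁ s₂ h htf ⟨ℓ, t', α, β, γ, hℓ, ht', hd⟩ r (Or.inr hr) φ)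
    exact htf.isoT (asIso β).symm ht' ⟨hAL₂, hAR⟩
  · intro t' ht'
    exact ⟨⟨0, t', 0, 𝟙 t', 0, ts_zeroL s₁ (isZero_zero D), ht',
      contractible_distinguished₁ t'⟩, (htf.subT ht').2⟩

lemma p2_interF : starSet D F (shiftSet D G₂ (-1)) ∩ L₂ = F := by
  apply subset_antisymm
  · rintro B ⟨hB, hBL⟩
    obtain ⟨f₀, r, α, β, γ, hf₀, hr, hd⟩ := hB
    have h0 : IsZero r := isZero₃' _ hd (s₂.hom_zero B hBL r hr β)
      (fun g => s₂.hom_zero _ (ts_shift s₂ (htf.subF hf₀).1) r hr g)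
    haveI : IsIso α := ((Triangle.mk α β γ).isZero₃_iff_isIso₁ hd).1 h0
    have hBR : B ∈ shiftSet D G₁ (-1) := ts_charR s₁ (fun ℓ hℓ φ =>
      starFR_sub s₁ s₂ h htf ⟨f₀, r, α, β, γ, hf₀, hr, hd⟩ ℓ (Or.inl hℓ) φ)
    exact htf.isoF (asIso α) hf₀ ⟨hBL, hBR⟩
  · intro f₀ hf₀
    exact ⟨⟨f₀, 0, 𝟙 f₀, 0, 0, hf₀, ts_zeroR s₂ (isZero_zero D),
      contractible_distinguished f₀⟩, (htf.subF hf₀).1⟩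

end Part2


section Part1

variable {U V : Set D} (tp : IsTorsionPair D U V) (hLU : L₁ ⊆ U) (hUL : U ⊆ L₂)

include s₁ s₂ h tp hLU hUL

lemma p1_charU {A : D} (h0 : ∀ v ∈ V, ∀ φ : A ⟶ v, φ = 0) : A ∈ U := by
  obtain ⟨u₀, v₀, α, β, γ, hu, hv, hd⟩ := tp.cover A
  obtain ⟨g, hg⟩ := (Triangle.mk α β γ).coyoneda_exact₂ hd (𝟙 A) (by
    show 𝟙 A ≫ β = 0
    rw [id_comp]; exact h0 v₀ hv β)
  exact tp.addU.summand u₀ hu A g α hg.symm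

lemma p1_charV {B : D} (h0 : ∀ u ∈ U, ∀ φ : u ⟶ B, φ = 0) : B ∈ V := by
  obtain ⟨u₀, v₀, α, β, γ, hu, hv, hd⟩ := tp.cover B
  obtain ⟨g, hg⟩ := (Triangle.mk α β γ).yoneda_exact₂ hd (𝟙 B) (by
    show α ≫ 𝟙 B = 0
    rw [comp_id]; exact h0 u₀ hu α)
  exact tp.addV.summand v₀ hv B β g hg.symm

lemma p1_tpin :
    IsTorsionPairIn D (L₂ ∩ shiftSet D G₁ (-1)) (U ∩ shiftSet D G₁ (-1)) (V ∩ L₂) where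
  subT := fun A hA => ⟨hUL hA.1, hA.2⟩
  subF := fun A hA =>
    ⟨hA.2, ts_charR s₁ (fun ℓ hℓ φ => tp.hom_zero ℓ (hLU hℓ) A hA.1 φ)⟩
  isoT := fun _ _ e hA hB => ⟨tp.addU.iso e hA.1, hB.2⟩
  isoF := fun _ _ e hA hB => ⟨tp.addV.iso e hA.1, hB.1⟩
  zeroT := fun Z hZ hH => ⟨tp.addU.zero Z hZ, hH.2⟩
  zeroF := fun Z hZ hH => ⟨tp.addV.zero Z hZ, hH.1⟩
  sumT := fun A hA B hB => ⟨tp.addU.sum A hA.1 B hB.1, ts_sumR s₁ hA.2 hB.2⟩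
  sumF := fun A hA B hB => ⟨tp.addV.sum A hA.1 B hB.1, ts_sumL s₂ hA.2 hB.2⟩
  summandT := fun A hA X i p hip hXH => ⟨tp.addU.summand A hA.1 X i p hip, hXH.2⟩
  summandF := fun A hA X i p hip hXH => ⟨tp.addV.summand A hA.1 X i p hip, hXH.1⟩
  hom_zero := fun A hA B hB φ => tp.hom_zero A hA.1 B hB.1 φ
  cover := by
    intro X hX
    obtain ⟨u₀, v₀, α, β, γ, hu, hv, hd⟩ := tp.cover X
    have hu₀R : u₀ ∈ shiftSet D G₁ (-1) := ts_charR s₁ (fun ℓ hℓ φ =>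
      vanish₁ _ hd φ (s₁.hom_zero ℓ hℓ X hX.2 (φ ≫ α))
        (fun g => tp.hom_zero _ (hLU (ts_shift s₁ hℓ)) v₀ hv g))
    have hv₀L : v₀ ∈ L₂ := ts_charL s₂ (fun r hr ψ => by
      obtain ⟨ψ', hψ'⟩ := (Triangle.mk α β γ).yoneda_exact₃ hd ψ
        (s₂.hom_zero X hX.1 r hr (β ≫ ψ))
      erw [hψ', s₂.hom_zero _ (ts_shift s₂ (hUL hu)) r hr ψ', comp_zero]; rfl)
    exact ⟨u₀, v₀, α, β, γ, ⟨hu, hu₀R⟩, ⟨hv, hv₀L⟩, hd⟩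

lemma p1_star1 : starSet D L₁ (U ∩ shiftSet D G₁ (-1)) = U := by
  apply subset_antisymm
  · rintro A ⟨ℓ, t', α, β, γ, hℓ, ht', hd⟩
    refine p1_charU s₁ s₂ h tp hLU hUL (fun v' hv' φ => ?_)
    obtain ⟨g, hg⟩ := (Triangle.mk α β γ).yoneda_exact₂ hd φ
      (tp.hom_zero ℓ (hLU hℓ) v' hv' (α ≫ φ))
    erw [hg, tp.hom_zero t' ht'.1 v' hv' g, comp_zero]; rfl
  · intro A hA
    obtain ⟨a₁, c, u, v, δ, ha₁, hcR, hT1⟩ := s₁.cover A trivial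
    have hcU : c ∈ U := by
      refine p1_charU s₁ s₂ h tp hLU hUL (fun v' hv' φ => ?_)
      obtain ⟨ψ, hψ⟩ := (Triangle.mk u v δ).yoneda_exact₃ hT1 φ
        (tp.hom_zero A hA v' hv' (v ≫ φ))
      erw [hψ, tp.hom_zero _ (hLU (ts_shift s₁ ha₁)) v' hv' ψ, comp_zero]; rfl
    exact ⟨a₁, c, u, v, δ, ha₁, ⟨hcU, hcR⟩, hT1⟩

lemma p1_star2 : starSet D (V ∩ L₂) (shiftSet D G₂ (-1)) = V := by
  apply subset_antisymm
  · rintro B ⟨f₀, r, α, β, γ, hf₀, hr, hd⟩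
    refine p1_charV s₁ s₂ h tp hLU hUL (fun u' hu' φ => ?_)
    obtain ⟨g, hg⟩ := (Triangle.mk α β γ).coyoneda_exact₂ hd φ
      (s₂.hom_zero u' (hUL hu') r hr (φ ≫ β))
    erw [hg, tp.hom_zero u' hu' f₀ hf₀.1 g, zero_comp]; rfl
  · intro B hB
    obtain ⟨b', b, ι, π, γ, hb'L, hbR, hT2⟩ := s₂.cover B trivial
    have hb'V : b' ∈ V := p1_charV s₁ s₂ h tp hLU hUL (fun u' hu' φ =>
      vanish₁ _ hT2 φ (tp.hom_zero u' hu' B hB (φ ≫ ι))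
        (fun g => s₂.hom_zero _ (ts_shift s₂ (hUL hu')) b hbR g))
    exact ⟨b', b, ι, π, γ, ⟨hb'V, hb'L⟩, hbR, hT2⟩

end Part1

end Main

end AuxiliaryLemmas

/-- Corollary 3.11 (1): for `t`-structures `s₁ = (L₁, G₁)`,
`s₂ = (L₂, G₂)` with `L₁ ⊆ L₂` and `ℋ = C₂^{≤0} ∩ C₁^{≥1} = L₂ ∩ G₁[-1]`, the maps
`φ(𝒰,𝒱) = (𝒰 ∩ C₁^{≥1}, 𝒱 ∩ C₂^{≤0})` and `ψ(𝒯,ℱ) = (C₁^{≤0} * 𝒯, ℱ * C₂^{≥1})`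
are mutually inverse, order preserving bijections between torsion pairs `(𝒰,𝒱)` in `D`
with `C₁^{≤0} ⊆ 𝒰 ⊆ C₂^{≤0}` and torsion pairs in `ℋ`. -/
theorem stmt5 (L₁ G₁ L₂ G₂ : Set D)
    (s₁ : IsTStructure D L₁ G₁) (s₂ : IsTStructure D L₂ G₂) (h : L₁ ⊆ L₂) :
    -- φ is well defined and ψ ∘ φ = id
    (∀ U V, IsTorsionPair D U V → L₁ ⊆ U → U ⊆ L₂ →
       IsTorsionPairIn D (L₂ ∩ shiftSet D G₁ (-1)) (U ∩ shiftSet D G₁ (-1)) (V ∩ L₂) ∧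
       starSet D L₁ (U ∩ shiftSet D G₁ (-1)) = U ∧
       starSet D (V ∩ L₂) (shiftSet D G₂ (-1)) = V) ∧
    -- ψ is well defined and φ ∘ ψ = id
    (∀ T F, IsTorsionPairIn D (L₂ ∩ shiftSet D G₁ (-1)) T F →
       IsTorsionPair D (starSet D L₁ T) (starSet D F (shiftSet D G₂ (-1))) ∧
       L₁ ⊆ starSet D L₁ T ∧ starSet D L₁ T ⊆ L₂ ∧
       starSet D L₁ T ∩ shiftSet D G₁ (-1) = T ∧
       starSet D F (shiftSet D G₂ (-1)) ∩ L₂ = F) ∧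
    -- φ preserves the orders (inclusion of torsion classes)
    (∀ U V U' V', IsTorsionPair D U V → IsTorsionPair D U' V' →
       L₁ ⊆ U → U ⊆ L₂ → L₁ ⊆ U' → U' ⊆ L₂ → U ⊆ U' →
       U ∩ shiftSet D G₁ (-1) ⊆ U' ∩ shiftSet D G₁ (-1)) ∧
    -- ψ preserves the orders
    (∀ T F T' F', IsTorsionPairIn D (L₂ ∩ shiftSet D G₁ (-1)) T F →
       IsTorsionPairIn D (L₂ ∩ shiftSet D G₁ (-1)) T' F' → T ⊆ T' →
       starSet D L₁ T ⊆ starSet D L₁ T') := by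
  refine ⟨?_, ?_, ?_, ?_⟩
  · intro U V tp hLU hUL
    exact ⟨p1_tpin s₁ s₂ h tp hLU hUL, p1_star1 s₁ s₂ h tp hLU hUL,
      p1_star2 s₁ s₂ h tp hLU hUL⟩
  · intro T F htf
    refine ⟨⟨?_, ?_, ?_, cover2 s₁ s₂ h htf⟩, ?_, ?_,
      p2_interT s₁ s₂ h htf, p2_interF s₁ s₂ h htf⟩
    · rw [subset_antisymm (starLT_sub s₁ s₂ h htf) (sub_starLT s₁ s₂ h htf)]
      exact rOrth_additive _
    · rw [subset_antisymm (starFR_sub s₁ s₂ h htf) (sub_starFR s₁ s₂ h htf)]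
      exact lOrth_additive _
    · rintro A hA B ⟨f₀, r, α, β, γ, hf₀, hr, hd⟩ φ
      have hA' := starLT_sub s₁ s₂ h htf hA
      obtain ⟨g, hg⟩ := (Triangle.mk α β γ).coyoneda_exact₂ hd φ (hA' r (Or.inr hr) (φ ≫ β))
      erw [hg, hA' f₀ (Or.inl hf₀) g, zero_comp]; rfl
    · intro ℓ hℓ
      exact ⟨ℓ, 0, 𝟙 ℓ, 0, 0, hℓ, htf.zeroT 0 (isZero_zero D)
        ⟨ts_zeroL s₂ (isZero_zero D), ts_zeroR s₁ (isZero_zero D)⟩,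
        contractible_distinguished ℓ⟩
    · intro A hA
      exact ts_charL s₂ (fun r hr φ => starLT_sub s₁ s₂ h htf hA r (Or.inr hr) φ)
  · intro U V U' V' _ _ _ _ _ _ hUU' A hA
    exact ⟨hUU' hA.1, hA.2⟩
  · intro T F T' F' _ _ hTT' A hA
    obtain ⟨ℓ, t', α, β, γ, hℓ, ht', hd⟩ := hA
    exact ⟨ℓ, t', α, β, γ, hℓ, hTT' ht', hd⟩
end
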